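/- arXiv:2601.13448 — 4 statements merged into one kernel-verified Lean document; each statement's English description precedes it below -/
import Mathlib

section
/- Under Assumptions U and F, if the stepsize satisfies τ ≤ 1/L^{ww}_{F,1}, then the deterministic BADR-GD iterates satisfy, for every t ≥ 0: ‖w_{t+1} − w*_{t+1}‖² ≤ (1 − τμ_F/2)‖w_t − w*_t‖² + (2/(τμ_F))(M_C/μ_F)²γ²‖D_{λ,t}‖². -/
open MeasureTheory Finset

noncomputable section

/-- The model space `ℝ^d`. -/
abbrev Wsp (d : ℕ) : Type := EuclideanSpace ℝ (Fin d)

/-- The weight space `ℝ^S`. -/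
abbrev Lsp (S : ℕ) : Type := EuclideanSpace ℝ (Fin S)

/-- Partial gradient `∇_w G(w, λ)`. -/
noncomputable def gradW {d S : ℕ} (G : Wsp d → Lsp S → ℝ) (w : Wsp d) (l : Lsp S) : Wsp d :=
  gradient (fun w' => G w' l) w

/-- Partial gradient `∇_λ G(w, λ)`. -/
noncomputable def gradL {d S : ℕ} (G : Wsp d → Lsp S → ℝ) (w : Wsp d) (l : Lsp S) : Lsp S :=
  gradient (fun l' => G w l') l

/-- Hessian `∇²_{ww} G(w, λ)`, as a continuous linear map. -/
noncomputable def hessWW {d S : ℕ} (G : Wsp d → Lsp S → ℝ) (w : Wsp d) (l : Lsp S) :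
    Wsp d →L[ℝ] Wsp d :=
  fderiv ℝ (fun w' => gradW G w' l) w

/-- Cross Hessian `∇²_{wλ} G(w, λ)`, as a continuous linear map `ℝ^S →L ℝ^d`. -/
noncomputable def hessWL {d S : ℕ} (G : Wsp d → Lsp S → ℝ) (w : Wsp d) (l : Lsp S) :
    Lsp S →L[ℝ] Wsp d :=
  fderiv ℝ (fun l' => gradW G w l') l

section AuxLemmas

open Set InnerProductSpace

variable {E : Type*} [NormedAddCommGroup E] [InnerProductSpace ℝ E] [CompleteSpace E]

local notation "⟪" x ", " y "⟫" => @inner ℝ _ _ x y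

lemma hasGradientAt_const_mul_norm_sq (c : ℝ) (x : E) :
    HasGradientAt (fun y : E => c * ‖y‖ ^ 2) ((2 * c) • x) x := by
  have h1 : HasFDerivAt (fun y : E => ⟪y, y⟫)
      ((fderivInnerCLM ℝ (x, x)).comp ((ContinuousLinearMap.id ℝ E).prod
        (ContinuousLinearMap.id ℝ E))) x :=
    (hasFDerivAt_id x).inner ℝ (hasFDerivAt_id x)
  have h2 : HasFDerivAt (fun y : E => c * ⟪y, y⟫)
      (c • ((fderivInnerCLM ℝ (x, x)).comp ((ContinuousLinearMap.id ℝ E).prod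
        (ContinuousLinearMap.id ℝ E)))) x := h1.const_mul c
  have heq : (fun y : E => c * ⟪y, y⟫) = fun y : E => c * ‖y‖ ^ 2 := by
    funext y; rw [real_inner_self_eq_norm_sq]
  have hlin : (c • ((fderivInnerCLM ℝ (x, x)).comp ((ContinuousLinearMap.id ℝ E).prod
        (ContinuousLinearMap.id ℝ E)))) = toDual ℝ E ((2 * c) • x) := by
    ext v
    simp [fderivInnerCLM_apply, real_inner_comm, real_inner_smul_left]
    ring
  rw [hasGradientAt_iff_hasFDerivAt, ← hlin, ← heq]
  exact h2

lemma convex_first_order {f : E → ℝ} {g x y : E}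
    (hf : ConvexOn ℝ Set.univ f) (hg : HasGradientAt f g x) :
    f x + ⟪g, y - x⟫ ≤ f y := by
  have hline : HasDerivAt (fun t : ℝ => x + t • (y - x)) (y - x) 0 := by
    simpa using (((hasDerivAt_id (0:ℝ)).smul_const (y - x)).const_add x)
  have hψd : HasDerivAt (fun t : ℝ => f (x + t • (y - x))) ⟪g, y - x⟫ 0 := by
    have hfd : HasFDerivAt f (toDual ℝ E g) (x + (0:ℝ) • (y - x)) := by
      simpa using hg.hasFDerivAt
    have h := hfd.comp_hasDerivAt 0 hline; simp at h; exact h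
  have hcon : ConvexOn ℝ Set.univ fun t : ℝ => f (x + t • (y - x)) := by
    have := hf.comp_affineMap (AffineMap.lineMap x y)
    have he : (f ∘ AffineMap.lineMap x y) = fun t : ℝ => f (x + t • (y - x)) := by
      funext t
      simp [AffineMap.lineMap_apply, add_comm]
    rw [he] at this
    simpa using this
  have := hcon.le_slope_of_hasDerivAt (mem_univ (0:ℝ)) (mem_univ (1:ℝ)) one_pos hψd
  rw [slope_def_field] at this
  simp at this
  linarith

lemma strong_first_order {f : E → ℝ} {μ : ℝ} (hμ : 0 < μ) {g x y : E}
    (hf : StrongConvexOn Set.univ μ f) (hg : HasGradientAt f g x) :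
    f x + ⟪g, y - x⟫ + μ / 2 * ‖y - x‖ ^ 2 ≤ f y := by
  have hconv : ConvexOn ℝ Set.univ fun z : E => f z - μ / 2 * ‖z‖ ^ 2 :=
    strongConvexOn_iff_convex.1 hf
  have hg2 : HasGradientAt (fun z : E => f z - μ / 2 * ‖z‖ ^ 2) (g - μ • x) x := by
    have h2 := hasGradientAt_const_mul_norm_sq (μ / 2) x
    have h3 := hg.hasFDerivAt.sub h2.hasFDerivAt
    rw [hasGradientAt_iff_hasFDerivAt, map_sub]
    rw [show (2 * (μ / 2)) • x = μ • x by congr 1; ring] at h3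
    exact h3
  have := convex_first_order (y := y) hconv hg2
  have hexp : ⟪g - μ • x, y - x⟫ = ⟪g, y - x⟫ - μ * ⟪x, y - x⟫ := by
    rw [inner_sub_left, real_inner_smul_left]
  have hns : ‖y - x‖ ^ 2 = ‖y‖ ^ 2 - 2 * ⟪y, x⟫ + ‖x‖ ^ 2 := norm_sub_sq_real y x
  have hix : ⟪x, y - x⟫ = ⟪x, y⟫ - ‖x‖ ^ 2 := by
    rw [inner_sub_right, real_inner_self_eq_norm_sq]
  have hcomm : ⟪y, x⟫ = ⟪x, y⟫ := real_inner_comm x y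
  nlinarith [this]

lemma descent_lemma {f : E → ℝ} {g : E → E} {L : ℝ} (hL : 0 ≤ L)
    (hdiff : ∀ z, HasGradientAt f (g z) z)
    (hlip : ∀ a b, ‖g a - g b‖ ≤ L * ‖a - b‖) (x y : E) :
    f y ≤ f x + ⟪g x, y - x⟫ + L / 2 * ‖y - x‖ ^ 2 := by
  set v := y - x with hv
  have hφd : ∀ t : ℝ, HasDerivAt
      (fun t : ℝ => L * t ^ 2 / 2 * ‖v‖ ^ 2 + t * ⟪g x, v⟫ - (f (x + t • v) - f x))
      (L * t * ‖v‖ ^ 2 + ⟪g x, v⟫ - ⟪g (x + t • v), v⟫) t := by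
    intro t
    have hline : HasDerivAt (fun t : ℝ => x + t • v) v t := by
      simpa using (((hasDerivAt_id t).smul_const v).const_add x)
    have hcomp : HasDerivAt (fun t : ℝ => f (x + t • v)) ⟪g (x + t • v), v⟫ t := by
      have hfd : HasFDerivAt f (toDual ℝ E (g (x + t • v))) (x + t • v) :=
        (hdiff (x + t • v)).hasFDerivAt
      have h := hfd.comp_hasDerivAt t hline; simp at h; exact h
    have h1 : HasDerivAt (fun t : ℝ => L * t ^ 2 / 2 * ‖v‖ ^ 2) (L * t * ‖v‖ ^ 2) t := by
      have : HasDerivAt (fun t : ℝ => t ^ 2) (2 * t) t := by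
        simpa using hasDerivAt_pow 2 t
      have h := (this.const_mul (L / 2)).mul_const (‖v‖ ^ 2)
      have hfeq : (fun s : ℝ => L / 2 * s ^ 2 * ‖v‖ ^ 2)
          = fun s : ℝ => L * s ^ 2 / 2 * ‖v‖ ^ 2 := by funext s; ring
      rw [hfeq] at h
      exact h.congr_deriv (by ring)
    have h2 : HasDerivAt (fun t : ℝ => t * ⟪g x, v⟫) ⟪g x, v⟫ t := by
      simpa using (hasDerivAt_id t).mul_const ⟪g x, v⟫
    have h := (h1.add h2).sub (hcomp.sub_const (f x)); exact h
  have hmono : MonotoneOn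
      (fun t : ℝ => L * t ^ 2 / 2 * ‖v‖ ^ 2 + t * ⟪g x, v⟫ - (f (x + t • v) - f x))
      (Set.Icc 0 1) := by
    apply monotoneOn_of_deriv_nonneg (convex_Icc 0 1)
    · intro t ht
      exact ((hφd t).differentiableAt).continuousAt.continuousWithinAt
    · intro t ht
      exact ((hφd t).differentiableAt).differentiableWithinAt
    · intro t ht
      rw [interior_Icc] at ht
      rw [(hφd t).deriv]
      have hcs : ⟪g (x + t • v) - g x, v⟫ ≤ ‖g (x + t • v) - g x‖ * ‖v‖ :=
        real_inner_le_norm _ _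
      have hl : ‖g (x + t • v) - g x‖ ≤ L * (t * ‖v‖) := by
        have := hlip (x + t • v) x
        simpa [norm_smul, abs_of_pos ht.1] using this
      have hv0 : (0:ℝ) ≤ ‖v‖ := norm_nonneg _
      have : ⟪g (x + t • v), v⟫ - ⟪g x, v⟫ ≤ L * t * ‖v‖ ^ 2 := by
        rw [← inner_sub_left]
        calc ⟪g (x + t • v) - g x, v⟫ ≤ ‖g (x + t • v) - g x‖ * ‖v‖ := hcs
        _ ≤ L * (t * ‖v‖) * ‖v‖ := by
            apply mul_le_mul_of_nonneg_right hl hv0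
        _ = L * t * ‖v‖ ^ 2 := by ring
      linarith
  have h01 := hmono (Set.mem_Icc.2 ⟨le_refl 0, zero_le_one⟩)
    (Set.mem_Icc.2 ⟨zero_le_one, le_refl 1⟩) zero_le_one
  simp only [one_smul, zero_smul, add_zero, one_pow] at h01
  have hxy : x + v = y := by rw [hv]; abel
  rw [hxy] at h01
  simp at h01
  nlinarith [h01]

lemma gradient_zero_of_min {f : E → ℝ} {g z : E} (hg : HasGradientAt f g z)
    (hmin : ∀ w, f z ≤ f w) : g = 0 := by
  have h1 : IsLocalMin f z := Filter.Eventually.of_forall hmin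
  have h2 : toDual ℝ E g = 0 := h1.hasFDerivAt_eq_zero hg.hasFDerivAt
  have := congrArg (toDual ℝ E).symm h2
  simpa using this

lemma strong_monotonicity {f : E → ℝ} {μ : ℝ} (hμ : 0 < μ) {ga gb : E} {a b : E}
    (hf : StrongConvexOn Set.univ μ f)
    (hga : HasGradientAt f ga a) (hgb : HasGradientAt f gb b) :
    μ * ‖a - b‖ ^ 2 ≤ ⟪ga - gb, a - b⟫ := by
  have h1 := strong_first_order (y := b) hμ hf hga
  have h2 := strong_first_order (y := a) hμ hf hgb
  have he : ‖b - a‖ = ‖a - b‖ := norm_sub_rev b a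
  have hi1 : ⟪ga, b - a⟫ = -⟪ga, a - b⟫ := by
    rw [← inner_neg_right]; congr 1; abel
  rw [inner_sub_left]
  have he2 : ‖b - a‖ ^ 2 = ‖a - b‖ ^ 2 := by rw [he]
  rw [hi1, he2] at h1
  linarith

lemma gd_contraction {f : E → ℝ} {g : E → E} {μ L τ : ℝ}
    (hμ : 0 < μ) (hL : μ ≤ L) (hτ : 0 < τ) (hτL : τ * L ≤ 1)
    (hdiff : ∀ z, HasGradientAt f (g z) z)
    (hsc : StrongConvexOn Set.univ μ f)
    (hlip : ∀ a b, ‖g a - g b‖ ≤ L * ‖a - b‖)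
    {z : E} (hmin : ∀ w, f z ≤ f w) (x : E) :
    ‖x - τ • g x - z‖ ^ 2 ≤ (1 - τ * μ) * ‖x - z‖ ^ 2 := by
  have hLpos : 0 < L := lt_of_lt_of_le hμ hL
  -- strong convexity at x towards z
  have h1 := strong_first_order (y := z) hμ hsc (hdiff x)
  -- descent step
  have h2 := descent_lemma hLpos.le hdiff hlip x (x - L⁻¹ • g x)
  have h2' : f (x - L⁻¹ • g x) ≤ f x - 1 / (2 * L) * ‖g x‖ ^ 2 := by
    have hsub : x - L⁻¹ • g x - x = -(L⁻¹ • g x) := by abel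
    rw [hsub] at h2
    have hin : ⟪g x, -(L⁻¹ • g x)⟫ = -(L⁻¹ * ‖g x‖ ^ 2) := by
      rw [inner_neg_right, real_inner_smul_right, real_inner_self_eq_norm_sq]
    have hnn : ‖-(L⁻¹ • g x)‖ ^ 2 = L⁻¹ ^ 2 * ‖g x‖ ^ 2 := by
      rw [norm_neg, norm_smul]
      rw [norm_inv, Real.norm_eq_abs, abs_of_pos hLpos]
      ring
    rw [hin, hnn] at h2
    have hcomb : f x + -(L⁻¹ * ‖g x‖ ^ 2) + L / 2 * (L⁻¹ ^ 2 * ‖g x‖ ^ 2)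
        = f x - 1 / (2 * L) * ‖g x‖ ^ 2 := by
      field_simp
      ring
    rw [hcomb] at h2
    exact h2
  have hmin2 := hmin (x - L⁻¹ • g x)
  -- Δ := f x - f z ≥ 0
  have hΔ : 0 ≤ f x - f z := by linarith [hmin x]
  have hgb : ‖g x‖ ^ 2 ≤ 2 * L * (f x - f z) := by
    have hfz := le_trans hmin2 h2'
    have h4 : 1 / (2 * L) * ‖g x‖ ^ 2 ≤ f x - f z := by linarith
    calc ‖g x‖ ^ 2 = 2 * L * (1 / (2 * L) * ‖g x‖ ^ 2) := by field_simp
      _ ≤ 2 * L * (f x - f z) := by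
          apply mul_le_mul_of_nonneg_left h4
          positivity
  have hinz : ⟪g x, z - x⟫ = -⟪g x, x - z⟫ := by
    rw [← inner_neg_right]; congr 1; abel
  have hip : f x - f z + μ / 2 * ‖x - z‖ ^ 2 ≤ ⟪g x, x - z⟫ := by
    have he2 : ‖z - x‖ ^ 2 = ‖x - z‖ ^ 2 := by rw [norm_sub_rev]
    rw [hinz, he2] at h1
    linarith
  -- expansion
  have hexp : ‖x - τ • g x - z‖ ^ 2
      = ‖x - z‖ ^ 2 - 2 * τ * ⟪g x, x - z⟫ + τ ^ 2 * ‖g x‖ ^ 2 := by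
    have : x - τ • g x - z = (x - z) - τ • g x := by abel
    rw [this, norm_sub_sq_real, real_inner_smul_right, norm_smul, Real.norm_eq_abs,
      abs_of_pos hτ, real_inner_comm]
    ring
  rw [hexp]
  have hτ2 : τ ^ 2 * ‖g x‖ ^ 2 ≤ 2 * τ * (f x - f z) := by
    calc τ ^ 2 * ‖g x‖ ^ 2 ≤ τ ^ 2 * (2 * L * (f x - f z)) := by
          apply mul_le_mul_of_nonneg_left hgb (sq_nonneg τ)
      _ = 2 * τ * (f x - f z) * (τ * L) := by ring
      _ ≤ 2 * τ * (f x - f z) * 1 := by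
          apply mul_le_mul_of_nonneg_left hτL
          positivity
      _ = 2 * τ * (f x - f z) := by ring
  nlinarith [mul_le_mul_of_nonneg_left hip (by positivity : (0:ℝ) ≤ 2 * τ), hτ2]

lemma young_combine {A B E0 K D s : ℝ} (hA : 0 ≤ A) (hB : 0 ≤ B) (hE0 : 0 ≤ E0)
    (hK : 0 ≤ K) (hD : 0 ≤ D) (hs : 0 < s) (hs1 : s ≤ 1)
    (h1 : A ^ 2 ≤ (1 - s) * E0 ^ 2) (h2 : B ≤ K * D) :
    (A + B) ^ 2 ≤ (1 - s / 2) * E0 ^ 2 + 2 / s * (K ^ 2 * D ^ 2) := by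
  set ε : ℝ := s / (2 - s) with hε
  have h2s : (0:ℝ) < 2 - s := by linarith
  have hεpos : 0 < ε := div_pos hs h2s
  have hyoung : 2 * A * B ≤ ε * A ^ 2 + (1 / ε) * B ^ 2 := by
    have hkey : ε * A ^ 2 + (1 / ε) * B ^ 2 - 2 * A * B = (ε * A - B) ^ 2 / ε := by
      field_simp
      ring
    nlinarith [sq_nonneg (ε * A - B), div_nonneg (sq_nonneg (ε * A - B)) hεpos.le]
  have hsum : (A + B) ^ 2 ≤ (1 + ε) * A ^ 2 + (1 + 1 / ε) * B ^ 2 := by nlinarith [hyoung]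
  have hfac : (1 + ε) * (1 - s) ≤ 1 - s / 2 := by
    rw [hε]
    rw [show (1 : ℝ) + s / (2 - s) = 2 / (2 - s) by field_simp; ring]
    rw [div_mul_eq_mul_div, div_le_iff₀ h2s]
    nlinarith [sq_nonneg s]
  have hinv : 1 + 1 / ε = 2 / s := by
    rw [hε]; field_simp; ring
  have hstep1 : (1 + ε) * A ^ 2 ≤ (1 + ε) * ((1 - s) * E0 ^ 2) :=
    mul_le_mul_of_nonneg_left h1 (by linarith)
  have hstep2 : (1 + 1 / ε) * B ^ 2 ≤ 2 / s * (K ^ 2 * D ^ 2) := by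
    rw [hinv]
    have hB2 : B ^ 2 ≤ K ^ 2 * D ^ 2 := by nlinarith [h2, hB]
    apply mul_le_mul_of_nonneg_left hB2
    positivity
  have hstep1' : (1 + ε) * ((1 - s) * E0 ^ 2) ≤ (1 - s / 2) * E0 ^ 2 := by
    rw [← mul_assoc]
    apply mul_le_mul_of_nonneg_right hfac (sq_nonneg E0)
  linarith

/-- `InnerProductSpace.toDual` over `ℝ`, as a plain (non-conjugate) linear isometry equiv. -/
noncomputable def toDualReal (E : Type*) [NormedAddCommGroup E] [InnerProductSpace ℝ E]
    [CompleteSpace E] : E ≃ₗᵢ[ℝ] StrongDual ℝ E := InnerProductSpace.toDual ℝ E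

section Plumb

variable {W L : Type*} [NormedAddCommGroup W] [InnerProductSpace ℝ W] [CompleteSpace W]
  [NormedAddCommGroup L] [NormedSpace ℝ L]

/-- Partial gradient of `Φ : W × L → ℝ` in the first variable. -/
noncomputable def Gmap (Φ : W × L → ℝ) (p : W × L) : W :=
  (toDualReal W).symm ((fderiv ℝ Φ p).comp (ContinuousLinearMap.inl ℝ W L))

lemma hasGradientAt_Gmap {Φ : W × L → ℝ} (hΦ : Differentiable ℝ Φ) (w : W) (l : L) :
    HasGradientAt (fun w' => Φ (w', l)) (Gmap Φ (w, l)) w := by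
  have h3 := (hΦ (w, l)).hasFDerivAt.comp w (hasFDerivAt_prodMk_left (𝕜 := ℝ) w l)
  rw [hasGradientAt_iff_hasFDerivAt]
  have he : InnerProductSpace.toDual ℝ W (Gmap Φ (w, l))
      = (fderiv ℝ Φ (w, l)).comp (ContinuousLinearMap.inl ℝ W L) :=
    (InnerProductSpace.toDual ℝ W).apply_symm_apply _
  rw [he]
  exact h3

lemma contDiff_Gmap {Φ : W × L → ℝ} (hΦ : ContDiff ℝ 2 Φ) : ContDiff ℝ 1 (Gmap Φ) := by
  have h1 : ContDiff ℝ 1 (fun p => fderiv ℝ Φ p) := hΦ.fderiv_right (by norm_num)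
  have h2 : ContDiff ℝ 1
      (fun p => (fderiv ℝ Φ p).comp (ContinuousLinearMap.inl ℝ W L)) :=
    (((ContinuousLinearMap.compL ℝ W (W × L) ℝ).flip
      (ContinuousLinearMap.inl ℝ W L)).contDiff).comp h1
  exact ((toDualReal W).symm.contDiff).comp h2

end Plumb

end AuxLemmas

/-- Drift control of the lower variable of deterministic BADR-GD. -/

theorem lower_drift_badr_gd
    {d S : ℕ} (hd : 1 ≤ d) (hS : 1 ≤ S)
    (C : Set (Lsp S)) (hCne : C.Nonempty) (hCconv : Convex ℝ C) (hCcomp : IsCompact C)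
    (U F : Wsp d → Lsp S → ℝ)
    (hUdiff : ContDiff ℝ 1 (fun p : Wsp d × Lsp S => U p.1 p.2))
    (hFdiff : ContDiff ℝ 2 (fun p : Wsp d × Lsp S => F p.1 p.2))
    (wstar : Lsp S → Wsp d)
    (hwstar : ∀ l ∈ C, ∀ w : Wsp d, F (wstar l) l ≤ F w l)
    -- Assumption U
    (LU0 LU1 : ℝ) (hLU0 : 0 < LU0) (hLU1 : 0 < LU1)
    (hUlip : ∀ w₁ w₂ : Wsp d, ∀ l₁ ∈ C, ∀ l₂ ∈ C,
      |U w₁ l₁ - U w₂ l₂| ≤ LU0 * ‖((w₁, l₁) : Wsp d × Lsp S) - (w₂, l₂)‖)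
    (hgradUlip : ∀ w₁ w₂ : Wsp d, ∀ l₁ ∈ C, ∀ l₂ ∈ C,
      ‖fderiv ℝ (fun p : Wsp d × Lsp S => U p.1 p.2) (w₁, l₁) -
          fderiv ℝ (fun p : Wsp d × Lsp S => U p.1 p.2) (w₂, l₂)‖ ≤
        LU1 * (‖w₁ - w₂‖ + ‖l₁ - l₂‖))
    -- Assumption F
    (μF LF1 LF2ww MC LF2wl : ℝ)
    (hμF : 0 < μF) (hLF1 : μF ≤ LF1) (hLF2ww : 0 ≤ LF2ww) (hMC : 0 < MC) (hLF2wl : 0 < LF2wl)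
    (hFsc : ∀ l ∈ C, StrongConvexOn Set.univ μF (fun w => F w l))
    (hgradFlip : ∀ l ∈ C, ∀ w₁ w₂ : Wsp d, ‖gradW F w₁ l - gradW F w₂ l‖ ≤ LF1 * ‖w₁ - w₂‖)
    (hhessWWlip : ∀ w₁ w₂ : Wsp d, ∀ l₁ ∈ C, ∀ l₂ ∈ C,
      ‖hessWW F w₁ l₁ - hessWW F w₂ l₂‖ ≤ LF2ww * (‖w₁ - w₂‖ + ‖l₁ - l₂‖))
    (hhessWLbd : ∀ l₁ ∈ C, ∀ l₂ ∈ C, ‖hessWL F (wstar l₁) l₂‖ ≤ MC)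
    (hhessWLlip : ∀ w₁ w₂ : Wsp d, ∀ l₁ ∈ C, ∀ l₂ ∈ C,
      ‖hessWL F w₁ l₁ - hessWL F w₂ l₂‖ ≤ LF2wl * (‖w₁ - w₂‖ + ‖l₁ - l₂‖))
    -- Euclidean projection onto `C`
    (proj : Lsp S → Lsp S)
    (hprojmem : ∀ x, proj x ∈ C)
    (hprojmin : ∀ x, ∀ y ∈ C, ‖x - proj x‖ ≤ ‖x - y‖)
    -- deterministic BADR-GD iterates
    (τ ρ γ : ℝ) (hτpos : 0 < τ) (hρpos : 0 < ρ) (hγpos : 0 < γ)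
    (w v : ℕ → Wsp d) (lam : ℕ → Lsp S) (hlam0 : lam 0 ∈ C)
    (hwrec : ∀ t, w (t + 1) = w t - τ • gradW F (w t) (lam t))
    (hvrec : ∀ t, v (t + 1) = v t - ρ • (hessWW F (w t) (lam t) (v t) + gradW U (w t) (lam t)))
    (hlamrec : ∀ t, lam (t + 1) = proj (lam t - γ • (gradL U (w t) (lam t) +
        ContinuousLinearMap.adjoint (hessWL F (w t) (lam t)) (v t))))
    (hτ : τ ≤ 1 / LF1)
    : ∀ t : ℕ,
      ‖w (t + 1) - wstar (lam (t + 1))‖ ^ 2 ≤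
        (1 - τ * μF / 2) * ‖w t - wstar (lam t)‖ ^ 2 +
          (2 / (τ * μF)) * (MC / μF) ^ 2 * γ ^ 2 * ‖γ⁻¹ • (lam t - lam (t + 1))‖ ^ 2 := by
  classical
  intro t
  have hΦ2 : ContDiff ℝ 2 (fun p : Wsp d × Lsp S => F p.1 p.2) := hFdiff
  have hΦd : Differentiable ℝ (fun p : Wsp d × Lsp S => F p.1 p.2) :=
    hΦ2.differentiable (by norm_num)
  have hgrad : ∀ (a : Wsp d) (x : Lsp S),
      HasGradientAt (fun w' => F w' x) (Gmap (fun p : Wsp d × Lsp S => F p.1 p.2) (a, x)) a :=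
    fun a x => hasGradientAt_Gmap hΦd a x
  have hgradeq : ∀ (a : Wsp d) (x : Lsp S),
      gradW F a x = Gmap (fun p : Wsp d × Lsp S => F p.1 p.2) (a, x) :=
    fun a x => (hgrad a x).gradient
  have hmemC : ∀ n, lam n ∈ C := by
    intro n
    induction n with
    | zero => exact hlam0
    | succ n ih => rw [hlamrec n]; exact hprojmem _
  have hLF1pos : 0 < LF1 := lt_of_lt_of_le hμF hLF1
  have hτL : τ * LF1 ≤ 1 := by
    rw [le_div_iff₀ hLF1pos] at hτ
    exact hτ
  have hzero : ∀ x ∈ C, Gmap (fun p : Wsp d × Lsp S => F p.1 p.2) (wstar x, x) = 0 :=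
    fun x hx => gradient_zero_of_min (hgrad (wstar x) x) (hwstar x hx)
  have hG1 : ContDiff ℝ 1 (Gmap (fun p : Wsp d × Lsp S => F p.1 p.2)) := contDiff_Gmap hΦ2
  have hdiffL : ∀ (a : Wsp d) (x : Lsp S),
      DifferentiableAt ℝ (fun l' => gradW F a l') x := by
    intro a x
    have hfe : (fun l' => gradW F a l')
        = fun l' => Gmap (fun p : Wsp d × Lsp S => F p.1 p.2) (a, l') :=
      funext fun l' => hgradeq a l'
    rw [hfe]
    exact ((hG1.differentiable (by norm_num)) (a, x)).comp x
      (DifferentiableAt.prodMk (differentiableAt_const a) differentiableAt_id)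
  have hwLip : ∀ l₁, l₁ ∈ C → ∀ l₂, l₂ ∈ C →
      ‖wstar l₁ - wstar l₂‖ ≤ MC / μF * ‖l₁ - l₂‖ := by
    intro l₁ h₁ l₂ h₂
    have hmv : ‖gradW F (wstar l₁) l₂ - gradW F (wstar l₁) l₁‖ ≤ MC * ‖l₂ - l₁‖ := by
      have hb : ∀ x ∈ C, ‖fderiv ℝ (fun l' => gradW F (wstar l₁) l') x‖ ≤ MC :=
        fun x hx => hhessWLbd l₁ h₁ x hx
      exact hCconv.norm_image_sub_le_of_norm_fderiv_le
        (fun x _ => hdiffL (wstar l₁) x) hb h₁ h₂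
    have hsm := strong_monotonicity hμF (hFsc l₂ h₂) (hgrad (wstar l₁) l₂) (hgrad (wstar l₂) l₂)
    rw [hzero l₂ h₂, sub_zero] at hsm
    have h0 : gradW F (wstar l₁) l₁ = 0 := by rw [hgradeq]; exact hzero l₁ h₁
    have hre : Gmap (fun p : Wsp d × Lsp S => F p.1 p.2) (wstar l₁, l₂)
        = gradW F (wstar l₁) l₂ - gradW F (wstar l₁) l₁ := by
      rw [h0, sub_zero, hgradeq]
    have hGn : ‖Gmap (fun p : Wsp d × Lsp S => F p.1 p.2) (wstar l₁, l₂)‖ ≤ MC * ‖l₂ - l₁‖ := by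
      rw [hre]
      exact hmv
    have hcs := le_trans
      (real_inner_le_norm (Gmap (fun p : Wsp d × Lsp S => F p.1 p.2) (wstar l₁, l₂))
        (wstar l₁ - wstar l₂))
      (mul_le_mul_of_nonneg_right hGn (norm_nonneg (wstar l₁ - wstar l₂)))
    have key : μF * ‖wstar l₁ - wstar l₂‖ ^ 2
        ≤ MC * ‖l₂ - l₁‖ * ‖wstar l₁ - wstar l₂‖ := le_trans hsm hcs
    have hrev : ‖l₂ - l₁‖ = ‖l₁ - l₂‖ := norm_sub_rev _ _
    rcases eq_or_lt_of_le (norm_nonneg (wstar l₁ - wstar l₂)) with h | h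
    · rw [← h]
      positivity
    · have hmain : μF * ‖wstar l₁ - wstar l₂‖ ≤ MC * ‖l₁ - l₂‖ := by
        rw [← hrev]
        nlinarith [key, h]
      rw [div_mul_eq_mul_div, le_div_iff₀ hμF]
      linarith [hmain]
  have hlipG : ∀ a b : Wsp d,
      ‖Gmap (fun p : Wsp d × Lsp S => F p.1 p.2) (a, lam t)
        - Gmap (fun p : Wsp d × Lsp S => F p.1 p.2) (b, lam t)‖ ≤ LF1 * ‖a - b‖ := by
    intro a b
    rw [← hgradeq, ← hgradeq]
    exact hgradFlip (lam t) (hmemC t) a b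
  have hA2 : ‖w (t + 1) - wstar (lam t)‖ ^ 2 ≤ (1 - τ * μF) * ‖w t - wstar (lam t)‖ ^ 2 := by
    rw [hwrec t, hgradeq]
    exact gd_contraction hμF hLF1 hτpos hτL (fun z => hgrad z (lam t)) (hFsc (lam t) (hmemC t))
      hlipG (hwstar (lam t) (hmemC t)) (w t)
  have hτμ1 : τ * μF ≤ 1 :=
    le_trans (mul_le_mul_of_nonneg_left hLF1 hτpos.le) hτL
  have hB : ‖wstar (lam t) - wstar (lam (t + 1))‖ ≤ MC / μF * ‖lam t - lam (t + 1)‖ :=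
    hwLip (lam t) (hmemC t) (lam (t + 1)) (hmemC (t + 1))
  have htri : ‖w (t + 1) - wstar (lam (t + 1))‖
      ≤ ‖w (t + 1) - wstar (lam t)‖ + ‖wstar (lam t) - wstar (lam (t + 1))‖ := by
    have h : w (t + 1) - wstar (lam (t + 1))
        = (w (t + 1) - wstar (lam t)) + (wstar (lam t) - wstar (lam (t + 1))) := by abel
    rw [h]
    exact norm_add_le _ _
  have hsq : ‖w (t + 1) - wstar (lam (t + 1))‖ ^ 2
      ≤ (‖w (t + 1) - wstar (lam t)‖ + ‖wstar (lam t) - wstar (lam (t + 1))‖) ^ 2 :=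
    pow_le_pow_left₀ (norm_nonneg _) htri 2
  have hyc := young_combine (norm_nonneg (w (t + 1) - wstar (lam t)))
    (norm_nonneg (wstar (lam t) - wstar (lam (t + 1)))) (norm_nonneg (w t - wstar (lam t)))
    (by positivity : (0:ℝ) ≤ MC / μF) (norm_nonneg (lam t - lam (t + 1)))
    (by positivity : (0:ℝ) < τ * μF) hτμ1 hA2 hB
  have hγ : γ ^ 2 * ‖γ⁻¹ • (lam t - lam (t + 1))‖ ^ 2 = ‖lam t - lam (t + 1)‖ ^ 2 := by
    rw [norm_smul, Real.norm_eq_abs, abs_of_pos (inv_pos.2 hγpos), mul_pow]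
    field_simp
  refine le_trans (le_trans hsq hyc) (le_of_eq ?_)
  rw [show (2:ℝ) / (τ * μF) * (MC / μF) ^ 2 * γ ^ 2 * ‖γ⁻¹ • (lam t - lam (t + 1))‖ ^ 2
      = 2 / (τ * μF) * (MC / μF) ^ 2 * (γ ^ 2 * ‖γ⁻¹ • (lam t - lam (t + 1))‖ ^ 2) by ring, hγ]
  ring
end
end

section
/- Under Assumptions U and F, if the stepsize satisfies ρ ≤ 1/L^{ww}_{F,1}, then the dual iterates of deterministic BADR-GD satisfy, for every t ≥ 0: ‖v_t‖ ≤ 4L_{U,0}/(ρμ_F²) + ε_{v,0}, where ε_{v,0} := ‖v₀ − v*(w₀, λ₀)‖. -/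
open MeasureTheory Finset

noncomputable section

section AuxLemmas

open InnerProductSpace Set

local notation "⟪" x ", " y "⟫" => @inner ℝ _ _ x y

variable {E : Type*} [NormedAddCommGroup E] [InnerProductSpace ℝ E] [CompleteSpace E]

/-- The inverse of `toDual` as a genuinely ℝ-linear continuous map. -/
noncomputable def dualSymmCLM (E : Type*) [NormedAddCommGroup E] [InnerProductSpace ℝ E]
    [CompleteSpace E] : StrongDual ℝ E →L[ℝ] E where
  toFun φ := (InnerProductSpace.toDual ℝ E).symm φ
  map_add' φ ψ := by simp
  map_smul' r φ := by
    simp only [LinearIsometryEquiv.map_smulₛₗ, starRingEnd_apply, star_trivial,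
      RingHom.id_apply]
  cont := (InnerProductSpace.toDual ℝ E).symm.continuous

lemma dualSymmCLM_inner (φ : StrongDual ℝ E) (y : E) :
    ⟪dualSymmCLM E φ, y⟫ = φ y :=
  InnerProductSpace.toDual_symm_apply

lemma gradient_eq_dualSymmCLM (f : E → ℝ) :
    gradient f = fun y => dualSymmCLM E (fderiv ℝ f y) := rfl

/-- Norm bound on the gradient of a Lipschitz function. -/
lemma grad_norm_le_of_lip {f : E → ℝ} {K : ℝ} (hK : 0 ≤ K)
    (h : ∀ y z, |f y - f z| ≤ K * ‖y - z‖) (x : E) : ‖gradient f x‖ ≤ K := by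
  have hlip : LipschitzWith K.toNNReal f := by
    apply LipschitzWith.of_dist_le_mul
    intro y z
    rw [Real.dist_eq, dist_eq_norm]
    simpa [Real.coe_toNNReal K hK] using h y z
  have h1 : ‖gradient f x‖ = ‖fderiv ℝ f x‖ :=
    (InnerProductSpace.toDual ℝ E).symm.norm_map _
  rw [h1]
  simpa [Real.coe_toNNReal K hK] using norm_fderiv_le_of_lipschitz ℝ hlip

/-- Norm bound on the fderiv of a Lipschitz map. -/
lemma fderiv_norm_le_of_lip {F' : Type*} [NormedAddCommGroup F'] [NormedSpace ℝ F']
    {g : E → F'} {K : ℝ} (hK : 0 ≤ K)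
    (h : ∀ y z, ‖g y - g z‖ ≤ K * ‖y - z‖) (x : E) : ‖fderiv ℝ g x‖ ≤ K := by
  have hlip : LipschitzWith K.toNNReal g := by
    apply LipschitzWith.of_dist_le_mul
    intro y z
    rw [dist_eq_norm, dist_eq_norm]
    simpa [Real.coe_toNNReal K hK] using h y z
  simpa [Real.coe_toNNReal K hK] using norm_fderiv_le_of_lipschitz ℝ hlip

/-- Symmetry of the derivative of the gradient of a C² function. -/
lemma hess_symm {f : E → ℝ} (hf : ContDiff ℝ 2 f) (x u w : E) :
    ⟪fderiv ℝ (gradient f) x u, w⟫ = ⟪u, fderiv ℝ (gradient f) x w⟫ := by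
  have hder : ∀ y, HasFDerivAt f (fderiv ℝ f y) y := fun y =>
    ((hf.differentiable two_ne_zero) y).hasFDerivAt
  have hfd1 : ContDiff ℝ 1 (fderiv ℝ f) := hf.fderiv_right (by norm_num)
  have h2 : HasFDerivAt (fderiv ℝ f) (fderiv ℝ (fderiv ℝ f) x) x :=
    ((hfd1.differentiable one_ne_zero) x).hasFDerivAt
  have hsymm := second_derivative_symmetric hder h2
  have hGder : HasFDerivAt (gradient f)
      ((dualSymmCLM E).comp (fderiv ℝ (fderiv ℝ f) x)) x := by
    rw [gradient_eq_dualSymmCLM]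
    exact ((dualSymmCLM E).hasFDerivAt).comp x h2
  have hH : fderiv ℝ (gradient f) x = (dualSymmCLM E).comp (fderiv ℝ (fderiv ℝ f) x) :=
    hGder.fderiv
  rw [hH]
  simp only [ContinuousLinearMap.comp_apply]
  rw [dualSymmCLM_inner, real_inner_comm, dualSymmCLM_inner]
  exact hsymm u w

/-- Positive semidefiniteness (with modulus μ) of the derivative of the gradient of a
strongly convex C² function. -/
lemma psd_of_strongConvex {f : E → ℝ} {μ : ℝ} (hf : ContDiff ℝ 2 f)
    (hsc : StrongConvexOn Set.univ μ f) (x v : E) :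
    μ * ‖v‖ ^ 2 ≤ ⟪fderiv ℝ (gradient f) x v, v⟫ := by
  have hdf : Differentiable ℝ f := hf.differentiable two_ne_zero
  have hfd1 : ContDiff ℝ 1 (fderiv ℝ f) := hf.fderiv_right (by norm_num)
  have hGdiff : Differentiable ℝ (gradient f) := by
    rw [gradient_eq_dualSymmCLM]
    exact (dualSymmCLM E).differentiable.comp (hfd1.differentiable one_ne_zero)
  set G := gradient f with hGdef
  set H := fderiv ℝ (gradient f) x with hHdef
  have hH : HasFDerivAt G H x := (hGdiff x).hasFDerivAt
  have hline : ∀ t : ℝ, HasDerivAt (fun s : ℝ => x + s • v) v t := by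
    intro t
    simpa using ((hasDerivAt_id t).smul_const v).const_add x
  have key : ∀ y : E, (fderiv ℝ f y) v = ⟪v, G y⟫ := by
    intro y
    rw [real_inner_comm]
    exact (InnerProductSpace.toDual_symm_apply).symm
  set ψ : ℝ → ℝ := fun t => ⟪v, G (x + t • v)⟫ with hψdef
  have hψ0 : HasDerivAt ψ ⟪v, H v⟫ 0 := by
    have h1 : HasDerivAt (fun t : ℝ => G (x + t • v)) (H v) 0 := by
      have h0 : HasFDerivAt G H ((fun s : ℝ => x + s • v) 0) := by simpa using hH
      exact h0.comp_hasDerivAt 0 (hline 0)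
    have := (hasDerivAt_const (0:ℝ) v).inner ℝ h1
    simpa using this
  have hconv : ConvexOn ℝ Set.univ (fun y => f y - μ / 2 * ‖y‖ ^ 2) :=
    strongConvexOn_iff_convex.mp hsc
  set g : ℝ → ℝ := fun t => f (x + t • v) - μ / 2 * ‖x + t • v‖ ^ 2 with hgdef
  have hlmap : ∀ t : ℝ, (AffineMap.lineMap (x : E) (x + v) : ℝ →ᵃ[ℝ] E) t = x + t • v := by
    intro t
    rw [AffineMap.lineMap_apply]
    simp [add_sub_cancel_left]
    abel
  have hgconv : ConvexOn ℝ Set.univ g := by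
    have h := hconv.comp_affineMap (AffineMap.lineMap (x : E) (x + v) : ℝ →ᵃ[ℝ] E)
    have heq : g = (fun y => f y - μ / 2 * ‖y‖ ^ 2) ∘
        (AffineMap.lineMap (x : E) (x + v) : ℝ →ᵃ[ℝ] E) := by
      funext t
      simp [hgdef, Function.comp, hlmap t]
    rw [heq]
    simpa using h
  set g' : ℝ → ℝ := fun t => ψ t - μ * ⟪v, x + t • v⟫ with hg'def
  have hg' : ∀ t, HasDerivAt g (g' t) t := by
    intro t
    have part1 : HasDerivAt (fun s : ℝ => f (x + s • v)) (ψ t) t := by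
      have := (hdf (x + t • v)).hasFDerivAt.comp_hasDerivAt t (hline t)
      simpa [hψdef, key, Function.comp_def] using this
    have part2 : HasDerivAt (fun s : ℝ => μ / 2 * ‖x + s • v‖ ^ 2) (μ * ⟪v, x + t • v⟫) t := by
      have hi : HasDerivAt (fun s : ℝ => ⟪x + s • v, x + s • v⟫)
          (⟪x + t • v, v⟫ + ⟪v, x + t • v⟫) t := (hline t).inner ℝ (hline t)
      have hi2 : HasDerivAt (fun s : ℝ => μ / 2 * ⟪x + s • v, x + s • v⟫)
          (μ / 2 * (⟪x + t • v, v⟫ + ⟪v, x + t • v⟫)) t := hi.const_mul (μ / 2)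
      have heq : (fun s : ℝ => μ / 2 * ⟪x + s • v, x + s • v⟫)
          = fun s : ℝ => μ / 2 * ‖x + s • v‖ ^ 2 := by
        funext s; rw [real_inner_self_eq_norm_sq]
      have hval : μ / 2 * (⟪x + t • v, v⟫ + ⟪v, x + t • v⟫) = μ * ⟪v, x + t • v⟫ := by
        rw [real_inner_comm (x + t • v) v]; ring
      rw [heq, hval] at hi2
      exact hi2
    exact part1.sub part2
  have hmono : ∀ t : ℝ, 0 < t → g' 0 ≤ g' t := by
    intro t ht
    exact le_trans
      (hgconv.le_slope_of_hasDerivAt (Set.mem_univ 0) (Set.mem_univ t) ht (hg' 0))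
      (hgconv.slope_le_of_hasDerivAt (Set.mem_univ 0) (Set.mem_univ t) ht (hg' t))
  have hslope : ∀ t ∈ Set.Ioi (0:ℝ), μ * ‖v‖ ^ 2 ≤ slope ψ 0 t := by
    intro t ht
    have ht' : (0:ℝ) < t := ht
    have h1 := hmono t ht'
    have h2 : ⟪v, x + t • v⟫ = ⟪v, x⟫ + t * ‖v‖ ^ 2 := by
      rw [inner_add_right, real_inner_smul_right, real_inner_self_eq_norm_sq]
    have h4 : (⟪v, x + (0:ℝ) • v⟫ : ℝ) = ⟪v, x⟫ := by norm_num
    have h5 : μ * (t * ‖v‖ ^ 2) ≤ ψ t - ψ 0 := by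
      simp only [hg'def] at h1
      rw [h2, h4] at h1
      nlinarith [h1]
    rw [slope_def_field, sub_zero, le_div_iff₀ ht']
    nlinarith [h5]
  have htend : Filter.Tendsto (slope ψ 0) (nhdsWithin 0 (Set.Ioi 0)) (nhds ⟪v, H v⟫) := by
    have := hasDerivAt_iff_tendsto_slope.mp hψ0
    exact this.mono_left (nhdsWithin_mono 0 (fun y hy => Set.mem_compl_singleton_iff.mpr
      (ne_of_gt hy)))
  have hlim : μ * ‖v‖ ^ 2 ≤ ⟪v, H v⟫ :=
    ge_of_tendsto htend (eventually_nhdsWithin_of_forall hslope)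
  rw [real_inner_comm]
  exact hlim

/-- Contraction bound for `I - ρ A` with `A` symmetric, `μ`-psd and of norm at most `L`. -/
lemma contraction_bound {μ L ρ : ℝ} (A : E →L[ℝ] E)
    (hsym : ∀ u w : E, ⟪A u, w⟫ = ⟪u, A w⟫)
    (hpsd : ∀ u : E, μ * ‖u‖ ^ 2 ≤ ⟪A u, u⟫)
    (hbd : ‖A‖ ≤ L) (hμ : 0 < μ) (hμL : μ ≤ L) (hρ : 0 < ρ) (hρL : ρ * L ≤ 1) (x : E) :
    ‖x - ρ • A x‖ ≤ (1 - ρ * μ / 2) * ‖x‖ := by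
  have hL : 0 < L := lt_of_lt_of_le hμ hμL
  have ha1nn : μ * ‖x‖ ^ 2 ≤ ⟪A x, x⟫ := hpsd x
  have ha1nn' : 0 ≤ ⟪A x, x⟫ := le_trans (by positivity) ha1nn
  have ha2eq : ⟪A x, A x⟫ = ‖A x‖ ^ 2 := real_inner_self_eq_norm_sq _
  have ha2nn : (0:ℝ) ≤ ⟪A x, A x⟫ := by rw [ha2eq]; positivity
  have key1 : ⟪A (A x), A x⟫ ≤ L * ⟪A x, A x⟫ := by
    have h1 : ⟪A (A x), A x⟫ ≤ ‖A (A x)‖ * ‖A x‖ := real_inner_le_norm _ _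
    have h2 : ‖A (A x)‖ ≤ L * ‖A x‖ :=
      le_trans (A.le_opNorm _) (mul_le_mul_of_nonneg_right hbd (norm_nonneg _))
    calc ⟪A (A x), A x⟫ ≤ ‖A (A x)‖ * ‖A x‖ := h1
      _ ≤ (L * ‖A x‖) * ‖A x‖ := mul_le_mul_of_nonneg_right h2 (norm_nonneg _)
      _ = L * ⟪A x, A x⟫ := by rw [ha2eq]; ring
  have key2 : 0 ≤ L ^ 2 * ⟪A x, x⟫ - 2 * L * ⟪A x, A x⟫ + ⟪A (A x), A x⟫ := by
    have h0 : 0 ≤ ⟪A (L • x - A x), L • x - A x⟫ :=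
      le_trans (by positivity) (hpsd (L • x - A x))
    have hsw : ⟪A (A x), x⟫ = ⟪A x, A x⟫ := by
      rw [hsym (A x) x, real_inner_comm]
    have hsw2 : ⟪A x, x⟫ = ⟪x, A x⟫ := real_inner_comm _ _
    have hexp : ⟪A (L • x - A x), L • x - A x⟫ =
        L ^ 2 * ⟪A x, x⟫ - 2 * L * ⟪A x, A x⟫ + ⟪A (A x), A x⟫ := by
      rw [map_sub, A.map_smul]
      simp only [inner_sub_left, inner_sub_right, real_inner_smul_left, real_inner_smul_right]
      rw [hsw]
      ring
    linarith [h0, hexp.symm.le]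
  have key3 : ⟪A x, A x⟫ ≤ L * ⟪A x, x⟫ := by nlinarith [key1, key2, hL]
  have hexp2 : ‖x - ρ • A x‖ ^ 2 = ‖x‖ ^ 2 - 2 * ρ * ⟪A x, x⟫ + ρ ^ 2 * ⟪A x, A x⟫ := by
    rw [norm_sub_sq_real, real_inner_smul_right, norm_smul]
    rw [real_inner_comm x (A x), Real.norm_eq_abs, abs_of_pos hρ, mul_pow, ← ha2eq]
    ring
  have hbound : ‖x - ρ • A x‖ ^ 2 ≤ (1 - ρ * μ) * ‖x‖ ^ 2 := by
    have h1 : ρ ^ 2 * ⟪A x, A x⟫ ≤ ρ * ⟪A x, x⟫ := by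
      have h1a : ρ ^ 2 * ⟪A x, A x⟫ ≤ ρ ^ 2 * (L * ⟪A x, x⟫) :=
        mul_le_mul_of_nonneg_left key3 (by positivity)
      have h1b : ρ ^ 2 * (L * ⟪A x, x⟫) = (ρ * L) * (ρ * ⟪A x, x⟫) := by ring
      have h1c : (ρ * L) * (ρ * ⟪A x, x⟫) ≤ 1 * (ρ * ⟪A x, x⟫) :=
        mul_le_mul_of_nonneg_right hρL (mul_nonneg hρ.le ha1nn')
      linarith
    calc ‖x - ρ • A x‖ ^ 2
        = ‖x‖ ^ 2 - 2 * ρ * ⟪A x, x⟫ + ρ ^ 2 * ⟪A x, A x⟫ := hexp2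
      _ ≤ ‖x‖ ^ 2 - 2 * ρ * ⟪A x, x⟫ + ρ * ⟪A x, x⟫ := by linarith
      _ = ‖x‖ ^ 2 - ρ * ⟪A x, x⟫ := by ring
      _ ≤ ‖x‖ ^ 2 - ρ * (μ * ‖x‖ ^ 2) := by
          linarith [mul_le_mul_of_nonneg_left ha1nn hρ.le]
      _ = (1 - ρ * μ) * ‖x‖ ^ 2 := by ring
  have hρμ : ρ * μ ≤ 1 := le_trans (by nlinarith) hρL
  have hfac : (0:ℝ) ≤ 1 - ρ * μ / 2 := by nlinarith
  have hsq : ‖x - ρ • A x‖ ^ 2 ≤ ((1 - ρ * μ / 2) * ‖x‖) ^ 2 := by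
    calc ‖x - ρ • A x‖ ^ 2 ≤ (1 - ρ * μ) * ‖x‖ ^ 2 := hbound
      _ ≤ ((1 - ρ * μ / 2) * ‖x‖) ^ 2 := by nlinarith [sq_nonneg ‖x‖, sq_nonneg (ρ * μ)]
  have h := Real.sqrt_le_sqrt hsq
  rwa [Real.sqrt_sq (norm_nonneg _), Real.sqrt_sq (mul_nonneg hfac (norm_nonneg _))] at h

end AuxLemmas

local notation "⟪" x ", " y "⟫" => @inner ℝ _ _ x y

/-- Uniform boundedness of the dual variable of deterministic BADR-GD. -/
theorem dual_bounded_badr_gd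
    {d S : ℕ} (hd : 1 ≤ d) (hS : 1 ≤ S)
    (C : Set (Lsp S)) (hCne : C.Nonempty) (hCconv : Convex ℝ C) (hCcomp : IsCompact C)
    (U F : Wsp d → Lsp S → ℝ)
    (hUdiff : ContDiff ℝ 1 (fun p : Wsp d × Lsp S => U p.1 p.2))
    (hFdiff : ContDiff ℝ 2 (fun p : Wsp d × Lsp S => F p.1 p.2))
    (wstar : Lsp S → Wsp d)
    (hwstar : ∀ l ∈ C, ∀ w : Wsp d, F (wstar l) l ≤ F w l)
    -- Assumption U
    (LU0 LU1 : ℝ) (hLU0 : 0 < LU0) (hLU1 : 0 < LU1)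
    (hUlip : ∀ w₁ w₂ : Wsp d, ∀ l₁ ∈ C, ∀ l₂ ∈ C,
      |U w₁ l₁ - U w₂ l₂| ≤ LU0 * ‖((w₁, l₁) : Wsp d × Lsp S) - (w₂, l₂)‖)
    (hgradUlip : ∀ w₁ w₂ : Wsp d, ∀ l₁ ∈ C, ∀ l₂ ∈ C,
      ‖fderiv ℝ (fun p : Wsp d × Lsp S => U p.1 p.2) (w₁, l₁) -
          fderiv ℝ (fun p : Wsp d × Lsp S => U p.1 p.2) (w₂, l₂)‖ ≤
        LU1 * (‖w₁ - w₂‖ + ‖l₁ - l₂‖))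
    -- Assumption F
    (μF LF1 LF2ww MC LF2wl : ℝ)
    (hμF : 0 < μF) (hLF1 : μF ≤ LF1) (hLF2ww : 0 ≤ LF2ww) (hMC : 0 < MC) (hLF2wl : 0 < LF2wl)
    (hFsc : ∀ l ∈ C, StrongConvexOn Set.univ μF (fun w => F w l))
    (hgradFlip : ∀ l ∈ C, ∀ w₁ w₂ : Wsp d, ‖gradW F w₁ l - gradW F w₂ l‖ ≤ LF1 * ‖w₁ - w₂‖)
    (hhessWWlip : ∀ w₁ w₂ : Wsp d, ∀ l₁ ∈ C, ∀ l₂ ∈ C,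
      ‖hessWW F w₁ l₁ - hessWW F w₂ l₂‖ ≤ LF2ww * (‖w₁ - w₂‖ + ‖l₁ - l₂‖))
    (hhessWLbd : ∀ l₁ ∈ C, ∀ l₂ ∈ C, ‖hessWL F (wstar l₁) l₂‖ ≤ MC)
    (hhessWLlip : ∀ w₁ w₂ : Wsp d, ∀ l₁ ∈ C, ∀ l₂ ∈ C,
      ‖hessWL F w₁ l₁ - hessWL F w₂ l₂‖ ≤ LF2wl * (‖w₁ - w₂‖ + ‖l₁ - l₂‖))
    -- the dual solution `v*(w, λ)`, characterized by `∇²_{ww}F(w,λ) v*(w,λ) = ∇_w U(w,λ)`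
    (vstar : Wsp d → Lsp S → Wsp d)
    (hvstar : ∀ w : Wsp d, ∀ l ∈ C, hessWW F w l (vstar w l) = gradW U w l)
    -- Euclidean projection onto `C`
    (proj : Lsp S → Lsp S)
    (hprojmem : ∀ x, proj x ∈ C)
    (hprojmin : ∀ x, ∀ y ∈ C, ‖x - proj x‖ ≤ ‖x - y‖)
    -- deterministic BADR-GD iterates
    (τ ρ γ : ℝ) (hτpos : 0 < τ) (hρpos : 0 < ρ) (hγpos : 0 < γ)
    (w v : ℕ → Wsp d) (lam : ℕ → Lsp S) (hlam0 : lam 0 ∈ C)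
    (hwrec : ∀ t, w (t + 1) = w t - τ • gradW F (w t) (lam t))
    (hvrec : ∀ t, v (t + 1) = v t - ρ • (hessWW F (w t) (lam t) (v t) + gradW U (w t) (lam t)))
    (hlamrec : ∀ t, lam (t + 1) = proj (lam t - γ • (gradL U (w t) (lam t) +
        ContinuousLinearMap.adjoint (hessWL F (w t) (lam t)) (v t))))
    (hρ : ρ ≤ 1 / LF1)
    : ∀ t : ℕ, ‖v t‖ ≤ 4 * LU0 / (ρ * μF ^ 2) + ‖v 0 - vstar (w 0) (lam 0)‖ := by
  classical
  have hlamC : ∀ t, lam t ∈ C := by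
    intro t
    induction t with
    | zero => exact hlam0
    | succ n _ => rw [hlamrec n]; exact hprojmem _
  have hLF1pos : 0 < LF1 := lt_of_lt_of_le hμF hLF1
  have hρL : ρ * LF1 ≤ 1 := by
    calc ρ * LF1 ≤ (1 / LF1) * LF1 := mul_le_mul_of_nonneg_right hρ hLF1pos.le
      _ = 1 := by field_simp
  have hρμ : ρ * μF ≤ 1 := le_trans (mul_le_mul_of_nonneg_left hLF1 hρpos.le) hρL
  have hFl : ∀ l : Lsp S, ContDiff ℝ 2 (fun w' : Wsp d => F w' l) := fun l =>
    hFdiff.comp (contDiff_id.prodMk contDiff_const)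
  have hprodnorm : ∀ (w₁ w₂ : Wsp d) (l : Lsp S),
      ‖((w₁, l) : Wsp d × Lsp S) - (w₂, l)‖ = ‖w₁ - w₂‖ := by
    intro w₁ w₂ l
    have h0 : ((w₁, l) : Wsp d × Lsp S) - (w₂, l) = (w₁ - w₂, 0) := by
      rw [Prod.mk_sub_mk, sub_self]
    rw [h0, Prod.norm_def]
    simp only [norm_zero]
    exact max_eq_left (norm_nonneg _)
  have hgbd : ∀ (x : Wsp d), ∀ l ∈ C, ‖gradW U x l‖ ≤ LU0 := by
    intro x l hl
    apply grad_norm_le_of_lip hLU0.le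
    intro y z
    have h := hUlip y z l hl l hl
    rwa [hprodnorm y z l] at h
  have hAbd : ∀ (x : Wsp d), ∀ l ∈ C, ‖hessWW F x l‖ ≤ LF1 := by
    intro x l hl
    exact fderiv_norm_le_of_lip (le_trans hμF.le hLF1) (fun y z => hgradFlip l hl y z) x
  have hAsym : ∀ (x : Wsp d) (l : Lsp S) (u u' : Wsp d),
      ⟪hessWW F x l u, u'⟫ = ⟪u, hessWW F x l u'⟫ := by
    intro x l u u'
    exact hess_symm (hFl l) x u u'
  have hApsd : ∀ (x : Wsp d), ∀ l ∈ C, ∀ u : Wsp d,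
      μF * ‖u‖ ^ 2 ≤ ⟪hessWW F x l u, u⟫ := by
    intro x l hl u
    exact psd_of_strongConvex (hFl l) (hFsc l hl) x u
  have hcontr : ∀ (x : Wsp d), ∀ l ∈ C, ∀ u : Wsp d,
      ‖u - ρ • hessWW F x l u‖ ≤ (1 - ρ * μF / 2) * ‖u‖ := by
    intro x l hl u
    exact contraction_bound (hessWW F x l) (hAsym x l) (hApsd x l hl) (hAbd x l hl)
      hμF hLF1 hρpos hρL u
  set B : ℝ := 2 * LU0 / μF + ‖v 0‖ with hB
  have hBge : 2 * LU0 / μF ≤ B := by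
    have h := norm_nonneg (v 0)
    rw [hB]; linarith
  have hind : ∀ t, ‖v t‖ ≤ B := by
    intro t
    induction t with
    | zero =>
      have h0 : 0 ≤ 2 * LU0 / μF := by positivity
      rw [hB]; linarith
    | succ n ih =>
      rw [hvrec n]
      have hsplit : v n - ρ • (hessWW F (w n) (lam n) (v n) + gradW U (w n) (lam n))
          = (v n - ρ • hessWW F (w n) (lam n) (v n)) - ρ • gradW U (w n) (lam n) := by
        rw [smul_add]; abel
      rw [hsplit]
      have h1 := norm_sub_le (v n - ρ • hessWW F (w n) (lam n) (v n))
        (ρ • gradW U (w n) (lam n))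
      have h2 : ‖v n - ρ • hessWW F (w n) (lam n) (v n)‖ ≤ (1 - ρ * μF / 2) * ‖v n‖ :=
        hcontr (w n) (lam n) (hlamC n) (v n)
      have h3 : ‖ρ • gradW U (w n) (lam n)‖ ≤ ρ * LU0 := by
        rw [norm_smul, Real.norm_eq_abs, abs_of_pos hρpos]
        exact mul_le_mul_of_nonneg_left (hgbd (w n) (lam n) (hlamC n)) hρpos.le
      have hfacnn : (0:ℝ) ≤ 1 - ρ * μF / 2 := by nlinarith
      have h4 : (1 - ρ * μF / 2) * ‖v n‖ ≤ (1 - ρ * μF / 2) * B :=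
        mul_le_mul_of_nonneg_left ih hfacnn
      have h7 : ρ * μF / 2 * (2 * LU0 / μF) ≤ ρ * μF / 2 * B :=
        mul_le_mul_of_nonneg_left hBge (by positivity)
      have h8 : ρ * μF / 2 * (2 * LU0 / μF) = ρ * LU0 := by
        field_simp
      have h5 : (1 - ρ * μF / 2) * B + ρ * LU0 ≤ B := by nlinarith
      calc ‖v n - ρ • hessWW F (w n) (lam n) (v n) - ρ • gradW U (w n) (lam n)‖
          ≤ ‖v n - ρ • hessWW F (w n) (lam n) (v n)‖ + ‖ρ • gradW U (w n) (lam n)‖ := h1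
        _ ≤ (1 - ρ * μF / 2) * ‖v n‖ + ρ * LU0 := add_le_add h2 h3
        _ ≤ (1 - ρ * μF / 2) * B + ρ * LU0 := add_le_add_left h4 _
        _ ≤ B := h5
  intro t
  have hzbd : ‖vstar (w 0) (lam 0)‖ ≤ LU0 / μF := by
    set z := vstar (w 0) (lam 0) with hz
    have h1 : μF * ‖z‖ ^ 2 ≤ ⟪hessWW F (w 0) (lam 0) z, z⟫ := hApsd (w 0) (lam 0) hlam0 z
    rw [hvstar (w 0) (lam 0) hlam0] at h1
    have h2 : ⟪gradW U (w 0) (lam 0), z⟫ ≤ ‖gradW U (w 0) (lam 0)‖ * ‖z‖ :=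
      real_inner_le_norm _ _
    have h3 : ‖gradW U (w 0) (lam 0)‖ * ‖z‖ ≤ LU0 * ‖z‖ :=
      mul_le_mul_of_nonneg_right (hgbd (w 0) (lam 0) hlam0) (norm_nonneg _)
    have h4 : μF * ‖z‖ ^ 2 ≤ LU0 * ‖z‖ := by linarith
    rw [le_div_iff₀ hμF]
    nlinarith [norm_nonneg z, h4]
  have hv0 : ‖v 0‖ ≤ ‖v 0 - vstar (w 0) (lam 0)‖ + ‖vstar (w 0) (lam 0)‖ := by
    calc ‖v 0‖ = ‖(v 0 - vstar (w 0) (lam 0)) + vstar (w 0) (lam 0)‖ := by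
          rw [sub_add_cancel]
      _ ≤ ‖v 0 - vstar (w 0) (lam 0)‖ + ‖vstar (w 0) (lam 0)‖ := norm_add_le _ _
  have hnum : 3 * LU0 / μF ≤ 4 * LU0 / (ρ * μF ^ 2) := by
    rw [div_le_div_iff₀ hμF (by positivity)]
    nlinarith [mul_le_mul_of_nonneg_left hρμ
      (le_of_lt (mul_pos (mul_pos (by norm_num : (0:ℝ) < 3) hLU0) hμF)),
      mul_pos hLU0 hμF]
  calc ‖v t‖ ≤ B := hind t
    _ ≤ 2 * LU0 / μF + (‖v 0 - vstar (w 0) (lam 0)‖ + LU0 / μF) := by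
        rw [hB]; linarith
    _ = 3 * LU0 / μF + ‖v 0 - vstar (w 0) (lam 0)‖ := by ring
    _ ≤ 4 * LU0 / (ρ * μF ^ 2) + ‖v 0 - vstar (w 0) (lam 0)‖ := by linarith
end
end

section
/- Under Assumptions U and F, the deterministic BADR-GD iterates satisfy, for every t ≥ 0: ‖v*(w_{t+1}, λ_{t+1}) − v*(w_t, λ_t)‖ ≤ M_{v*}(τL^{ww}_{F,1}‖w_t − w*_t‖ + γ‖D_{λ,t}‖), where M_{v*} := L_{U,0}L^{ww}_{F,2}/μ_F² + L_{U,1}/μ_F. -/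
open MeasureTheory Finset

noncomputable section

open Set InnerProductSpace Topology Filter
open scoped RealInnerProductSpace

variable {E : Type*} [NormedAddCommGroup E] [InnerProductSpace ℝ E] [CompleteSpace E]

/-- The Riesz map as a real continuous linear map. -/
noncomputable def rieszR (E : Type*) [NormedAddCommGroup E] [InnerProductSpace ℝ E]
    [CompleteSpace E] : StrongDual ℝ E →L[ℝ] E :=
  LinearMap.mkContinuous
    { toFun := fun φ => (toDual ℝ E).symm φ
      map_add' := fun a b => map_add _ a b
      map_smul' := fun c a => by
        apply (toDual ℝ E).injective
        simp [LinearIsometryEquiv.map_smulₛₗ, starRingEnd_apply] }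
    1 (fun φ => by simp)

lemma rieszR_apply (φ : StrongDual ℝ E) : rieszR E φ = (toDual ℝ E).symm φ := rfl

lemma gradient_eq_rieszR (f : E → ℝ) (x : E) : gradient f x = rieszR E (fderiv ℝ f x) := rfl

lemma strong_mono {f : E → ℝ} {μ : ℝ} (hf : Differentiable ℝ f)
    (hsc : StrongConvexOn univ μ f) (a b : E) :
    μ * ‖b - a‖ ^ 2 ≤ ⟪gradient f b - gradient f a, b - a⟫ := by
  set u := b - a with hu
  have hψ : ConvexOn ℝ univ fun x => f x - μ / 2 * ‖x‖ ^ 2 :=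
    strongConvexOn_iff_convex.mp hsc
  set c : ℝ → E := fun t => t • u + a with hc
  have hcd : ∀ t : ℝ, HasDerivAt c u t := fun t => by
    have h := ((hasDerivAt_id t).smul_const u).add_const a; rw [one_smul] at h; exact h
  set φ : ℝ → ℝ := fun t => f (c t) - μ / 2 * ‖c t‖ ^ 2 with hφ
  have hφconv : ConvexOn ℝ univ φ := by
    have h1 := hψ.comp_affineMap (AffineMap.lineMap a b : ℝ →ᵃ[ℝ] E)
    have h2 : ((fun x => f x - μ / 2 * ‖x‖ ^ 2) ∘ (AffineMap.lineMap a b : ℝ →ᵃ[ℝ] E)) = φ := by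
      funext t
      simp [Function.comp, AffineMap.lineMap_apply, hφ, hc, hu, vsub_eq_sub, vadd_eq_add]
    rw [h2, Set.preimage_univ] at h1
    exact h1
  have hder : ∀ t : ℝ, HasDerivAt φ
      (⟪gradient f (c t), u⟫ - μ / 2 * (⟪c t, u⟫ + ⟪u, c t⟫)) t := by
    intro t
    have h1 : HasDerivAt (fun t => f (c t)) (⟪gradient f (c t), u⟫) t := by
      have := (hf (c t)).hasGradientAt.hasFDerivAt.comp_hasDerivAt t (hcd t)
      simpa [toDual_apply_apply, Function.comp_def] using this
    have h2 : HasDerivAt (fun t => ⟪c t, c t⟫) (⟪c t, u⟫ + ⟪u, c t⟫) t :=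
      (hcd t).inner ℝ (hcd t)
    have h3 : HasDerivAt (fun t => μ / 2 * ⟪c t, c t⟫)
        (μ / 2 * (⟪c t, u⟫ + ⟪u, c t⟫)) t := h2.const_mul (μ / 2)
    have h4 := h1.sub h3
    have hφeq : φ = (fun t => f (c t)) - fun t => μ / 2 * ⟪c t, c t⟫ := by
      funext s; simp [hφ, real_inner_self_eq_norm_sq]
    rw [hφeq]; exact h4
  have hmono := hφconv.monotoneOn_deriv (fun x _ => (hder x).differentiableAt)
    (mem_univ (0 : ℝ)) (mem_univ (1 : ℝ)) zero_le_one
  rw [(hder 0).deriv, (hder 1).deriv] at hmono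
  have hc0 : c 0 = a := by simp [hc]
  have hc1 : c 1 = b := by simp [hc, hu]
  rw [hc0, hc1] at hmono
  have h5 : ⟪gradient f b - gradient f a, u⟫ = ⟪gradient f b, u⟫ - ⟪gradient f a, u⟫ :=
    inner_sub_left _ _ _
  have h6 : ⟪b, u⟫ - ⟪a, u⟫ = ‖u‖ ^ 2 := by
    rw [← inner_sub_left, ← hu, real_inner_self_eq_norm_sq]
  have h7 : ⟪a, u⟫ = ⟪u, a⟫ := real_inner_comm _ _
  have h8 : ⟪b, u⟫ = ⟪u, b⟫ := real_inner_comm _ _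
  have h9 : (⟪b, u⟫ + ⟪u, b⟫) - (⟪a, u⟫ + ⟪u, a⟫) = 2 * ‖u‖ ^ 2 := by linarith
  have key : μ / 2 * ((⟪b, u⟫ + ⟪u, b⟫) - (⟪a, u⟫ + ⟪u, a⟫)) ≤
      ⟪gradient f b, u⟫ - ⟪gradient f a, u⟫ := by
    have h9' : μ / 2 * ((⟪b, u⟫ + ⟪u, b⟫) - (⟪a, u⟫ + ⟪u, a⟫)) =
        μ / 2 * (⟪b, u⟫ + ⟪u, b⟫) - μ / 2 * (⟪a, u⟫ + ⟪u, a⟫) := by ring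
    linarith [hmono]
  calc μ * ‖u‖ ^ 2 = μ / 2 * (2 * ‖u‖ ^ 2) := by ring
    _ = μ / 2 * ((⟪b, u⟫ + ⟪u, b⟫) - (⟪a, u⟫ + ⟪u, a⟫)) := by rw [h9]
    _ ≤ ⟪gradient f b, u⟫ - ⟪gradient f a, u⟫ := key
    _ = ⟪gradient f b - gradient f a, u⟫ := h5.symm

lemma hess_coercive {f : E → ℝ} {μ : ℝ} (hμ : 0 < μ) (hf : Differentiable ℝ f)
    (hsc : StrongConvexOn univ μ f) {w : E}
    (hg : DifferentiableAt ℝ (gradient f) w) (u : E) :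
    μ * ‖u‖ ^ 2 ≤ ⟪fderiv ℝ (gradient f) w u, u⟫ := by
  set g := gradient f with hgdef
  set H := fderiv ℝ g w with hH
  set c : ℝ → E := fun t => t • u + w with hc
  have hcd : ∀ t : ℝ, HasDerivAt c u t := fun t => by
    have h := ((hasDerivAt_id t).smul_const u).add_const w; rw [one_smul] at h; exact h
  have hc0 : c 0 = w := by simp [hc]
  have hgc : HasDerivAt (fun t => g (c t)) (H u) 0 := by
    have h' : HasFDerivAt g H (c 0) := hc0 ▸ hg.hasFDerivAt
    exact h'.comp_hasDerivAt 0 (hcd 0)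
  have hq : HasDerivAt (fun t => ⟪g (c t), u⟫) (⟪H u, u⟫) 0 := by
    have := hgc.inner ℝ (hasDerivAt_const (0 : ℝ) u)
    simpa using this
  have htend : Tendsto (slope (fun t => ⟪g (c t), u⟫) 0) (𝓝[>] (0:ℝ)) (𝓝 ⟪H u, u⟫) :=
    (hasDerivAt_iff_tendsto_slope.mp hq).mono_left
      (nhdsWithin_mono 0 (fun x hx => ne_of_gt hx))
  refine ge_of_tendsto htend ?_
  refine eventually_mem_nhdsWithin.mono (fun t ht => ?_)
  have ht : (0:ℝ) < t := ht
  have hsm := strong_mono hf hsc w (c t)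
  have hct : c t - w = t • u := by simp [hc]
  rw [hct, real_inner_smul_right, norm_smul, Real.norm_eq_abs, abs_of_pos ht] at hsm
  have hkey : μ * ‖u‖ ^ 2 * t ≤ ⟪g (c t) - g w, u⟫ := by
    refine le_of_mul_le_mul_left ?_ ht
    calc t * (μ * ‖u‖ ^ 2 * t) = μ * (t * ‖u‖) ^ 2 := by ring
      _ ≤ t * ⟪g (c t) - g w, u⟫ := hsm
  rw [slope_def_field]
  rw [sub_zero, le_div_iff₀ ht]
  have hsub : ⟪g (c t), u⟫ - ⟪g (c 0), u⟫ = ⟪g (c t) - g w, u⟫ := by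
    rw [hc0, ← inner_sub_left]
  rw [hsub]
  exact hkey

lemma coercive_norm {μ : ℝ} (hμ : 0 < μ) {H : E →L[ℝ] E}
    (hH : ∀ u, μ * ‖u‖ ^ 2 ≤ ⟪H u, u⟫) (x : E) : μ * ‖x‖ ≤ ‖H x‖ := by
  rcases eq_or_ne x 0 with rfl | hx
  · simp
  · have hxp : 0 < ‖x‖ := norm_pos_iff.mpr hx
    have h1 := hH x
    have h2 : ⟪H x, x⟫ ≤ ‖H x‖ * ‖x‖ := real_inner_le_norm _ _
    nlinarith

set_option maxHeartbeats 1000000 in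
/-- Drift of the dual solution along the deterministic BADR-GD iterates. -/
theorem dual_solution_drift_badr_gd
    {d S : ℕ} (hd : 1 ≤ d) (hS : 1 ≤ S)
    (C : Set (Lsp S)) (hCne : C.Nonempty) (hCconv : Convex ℝ C) (hCcomp : IsCompact C)
    (U F : Wsp d → Lsp S → ℝ)
    (hUdiff : ContDiff ℝ 1 (fun p : Wsp d × Lsp S => U p.1 p.2))
    (hFdiff : ContDiff ℝ 2 (fun p : Wsp d × Lsp S => F p.1 p.2))
    (wstar : Lsp S → Wsp d)
    (hwstar : ∀ l ∈ C, ∀ w : Wsp d, F (wstar l) l ≤ F w l)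
    -- Assumption U
    (LU0 LU1 : ℝ) (hLU0 : 0 < LU0) (hLU1 : 0 < LU1)
    (hUlip : ∀ w₁ w₂ : Wsp d, ∀ l₁ ∈ C, ∀ l₂ ∈ C,
      |U w₁ l₁ - U w₂ l₂| ≤ LU0 * ‖((w₁, l₁) : Wsp d × Lsp S) - (w₂, l₂)‖)
    (hgradUlip : ∀ w₁ w₂ : Wsp d, ∀ l₁ ∈ C, ∀ l₂ ∈ C,
      ‖fderiv ℝ (fun p : Wsp d × Lsp S => U p.1 p.2) (w₁, l₁) -
          fderiv ℝ (fun p : Wsp d × Lsp S => U p.1 p.2) (w₂, l₂)‖ ≤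
        LU1 * (‖w₁ - w₂‖ + ‖l₁ - l₂‖))
    -- Assumption F
    (μF LF1 LF2ww MC LF2wl : ℝ)
    (hμF : 0 < μF) (hLF1 : μF ≤ LF1) (hLF2ww : 0 ≤ LF2ww) (hMC : 0 < MC) (hLF2wl : 0 < LF2wl)
    (hFsc : ∀ l ∈ C, StrongConvexOn Set.univ μF (fun w => F w l))
    (hgradFlip : ∀ l ∈ C, ∀ w₁ w₂ : Wsp d, ‖gradW F w₁ l - gradW F w₂ l‖ ≤ LF1 * ‖w₁ - w₂‖)
    (hhessWWlip : ∀ w₁ w₂ : Wsp d, ∀ l₁ ∈ C, ∀ l₂ ∈ C,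
      ‖hessWW F w₁ l₁ - hessWW F w₂ l₂‖ ≤ LF2ww * (‖w₁ - w₂‖ + ‖l₁ - l₂‖))
    (hhessWLbd : ∀ l₁ ∈ C, ∀ l₂ ∈ C, ‖hessWL F (wstar l₁) l₂‖ ≤ MC)
    (hhessWLlip : ∀ w₁ w₂ : Wsp d, ∀ l₁ ∈ C, ∀ l₂ ∈ C,
      ‖hessWL F w₁ l₁ - hessWL F w₂ l₂‖ ≤ LF2wl * (‖w₁ - w₂‖ + ‖l₁ - l₂‖))
    -- the dual solution `v*(w, λ)`, characterized by `∇²_{ww}F(w,λ) v*(w,λ) = ∇_w U(w,λ)`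
    (vstar : Wsp d → Lsp S → Wsp d)
    (hvstar : ∀ w : Wsp d, ∀ l ∈ C, hessWW F w l (vstar w l) = gradW U w l)
    -- Euclidean projection onto `C`
    (proj : Lsp S → Lsp S)
    (hprojmem : ∀ x, proj x ∈ C)
    (hprojmin : ∀ x, ∀ y ∈ C, ‖x - proj x‖ ≤ ‖x - y‖)
    -- deterministic BADR-GD iterates
    (τ ρ γ : ℝ) (hτpos : 0 < τ) (hρpos : 0 < ρ) (hγpos : 0 < γ)
    (w v : ℕ → Wsp d) (lam : ℕ → Lsp S) (hlam0 : lam 0 ∈ C)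
    (hwrec : ∀ t, w (t + 1) = w t - τ • gradW F (w t) (lam t))
    (hvrec : ∀ t, v (t + 1) = v t - ρ • (hessWW F (w t) (lam t) (v t) + gradW U (w t) (lam t)))
    (hlamrec : ∀ t, lam (t + 1) = proj (lam t - γ • (gradL U (w t) (lam t) +
        ContinuousLinearMap.adjoint (hessWL F (w t) (lam t)) (v t))))
    : ∀ t : ℕ,
      ‖vstar (w (t + 1)) (lam (t + 1)) - vstar (w t) (lam t)‖ ≤
        (LU0 * LF2ww / μF ^ 2 + LU1 / μF) *
          (τ * LF1 * ‖w t - wstar (lam t)‖ + γ * ‖γ⁻¹ • (lam t - lam (t + 1))‖) := by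
  intro t
  have hmem : ∀ s : ℕ, lam s ∈ C := by
    intro s
    cases s with
    | zero => exact hlam0
    | succ n => rw [hlamrec n]; exact hprojmem _
  -- abbreviations
  set wa := w t with hwa
  set la := lam t with hla'
  set wb := w (t + 1) with hwb'
  set lb := lam (t + 1) with hlb'
  have hla : la ∈ C := hmem t
  have hlb : lb ∈ C := hmem (t + 1)
  -- differentiability basics
  have hFd : Differentiable ℝ (fun p : Wsp d × Lsp S => F p.1 p.2) :=
    hFdiff.differentiable (by norm_num)
  have hUd : Differentiable ℝ (fun p : Wsp d × Lsp S => U p.1 p.2) :=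
    hUdiff.differentiable one_ne_zero
  have hFd' : Differentiable ℝ (fderiv ℝ (fun p : Wsp d × Lsp S => F p.1 p.2)) :=
    (hFdiff.fderiv_right (m := 1) (by norm_num)).differentiable one_ne_zero
  have hpartF : ∀ (w0 : Wsp d) (l0 : Lsp S), HasFDerivAt (fun w' => F w' l0)
      ((fderiv ℝ (fun p : Wsp d × Lsp S => F p.1 p.2) (w0, l0)).comp
        (ContinuousLinearMap.inl ℝ (Wsp d) (Lsp S))) w0 :=
    fun w0 l0 => by
      have := (hFd (w0, l0)).hasFDerivAt.comp w0 (hasFDerivAt_prodMk_left (𝕜 := ℝ) w0 l0)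
      exact this
  have hpartU : ∀ (w0 : Wsp d) (l0 : Lsp S), HasFDerivAt (fun w' => U w' l0)
      ((fderiv ℝ (fun p : Wsp d × Lsp S => U p.1 p.2) (w0, l0)).comp
        (ContinuousLinearMap.inl ℝ (Wsp d) (Lsp S))) w0 :=
    fun w0 l0 => by
      have := (hUd (w0, l0)).hasFDerivAt.comp w0 (hasFDerivAt_prodMk_left (𝕜 := ℝ) w0 l0)
      exact this
  have hFld : ∀ l0 : Lsp S, Differentiable ℝ (fun w' => F w' l0) :=
    fun l0 w0 => (hpartF w0 l0).differentiableAt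
  -- differentiability of the partial gradient
  have hgd : ∀ (l0 : Lsp S) (w0 : Wsp d),
      DifferentiableAt ℝ (gradient (fun w' => F w' l0)) w0 := by
    intro l0 w0
    have heq : gradient (fun w' => F w' l0) = fun w' =>
        rieszR (Wsp d) (((ContinuousLinearMap.compL ℝ (Wsp d) (Wsp d × Lsp S) ℝ).flip
          (ContinuousLinearMap.inl ℝ (Wsp d) (Lsp S)))
          (fderiv ℝ (fun p : Wsp d × Lsp S => F p.1 p.2) (w', l0))) := by
      funext w'
      rw [gradient_eq_rieszR]
      congr 1
      rw [(hpartF w' l0).fderiv]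
      rfl
    rw [heq]
    exact (rieszR (Wsp d)).differentiableAt.comp _
      ((((ContinuousLinearMap.compL ℝ (Wsp d) (Wsp d × Lsp S) ℝ).flip
          (ContinuousLinearMap.inl ℝ (Wsp d) (Lsp S))).differentiableAt).comp _
        ((hFd' _).comp _ (differentiableAt_id.prodMk (differentiableAt_const l0))))
  -- coercivity of the Hessian
  have hHcoer : ∀ l0 ∈ C, ∀ (w0 x : Wsp d), μF * ‖x‖ ≤ ‖hessWW F w0 l0 x‖ := by
    intro l0 hl0 w0 x
    have hcoer : ∀ u : Wsp d, μF * ‖u‖ ^ 2 ≤ ⟪hessWW F w0 l0 u, u⟫_ℝ := by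
      intro u
      exact hess_coercive hμF (hFld l0) (hFsc l0 hl0) (hgd l0 w0) u
    exact coercive_norm hμF hcoer x
  -- bound on the norm of the partial gradient of U
  have hUgradnorm : ∀ (w0 : Wsp d), ∀ l0 ∈ C, ‖gradW U w0 l0‖ ≤ LU0 := by
    intro w0 l0 hl0
    have hlip : LipschitzWith ⟨LU0, hLU0.le⟩ (fun w' => U w' l0) := by
      apply LipschitzWith.of_dist_le_mul
      intro x y
      have h1 := hUlip x y l0 hl0 l0 hl0
      have hnorm : ‖((x, l0) : Wsp d × Lsp S) - (y, l0)‖ = ‖x - y‖ := by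
        simp [Prod.norm_def]
      rw [Real.dist_eq, dist_eq_norm]
      calc |U x l0 - U y l0| ≤ LU0 * ‖((x, l0) : Wsp d × Lsp S) - (y, l0)‖ := h1
        _ = (⟨LU0, hLU0.le⟩ : NNReal) * ‖x - y‖ := by rw [hnorm]
    have h2 : ‖fderiv ℝ (fun w' => U w' l0) w0‖ ≤ LU0 := by
      have h3 : ‖fderiv ℝ (fun w' => U w' l0) w0‖ ≤ ((⟨LU0, hLU0.le⟩ : NNReal) : ℝ) :=
        norm_fderiv_le_of_lipschitz ℝ hlip
      simpa using h3
    calc ‖gradW U w0 l0‖ = ‖fderiv ℝ (fun w' => U w' l0) w0‖ :=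
          (InnerProductSpace.toDual ℝ (Wsp d)).symm.norm_map _
      _ ≤ LU0 := h2
  -- Lipschitz property of the partial gradient of U
  have hUgradlip : ∀ (w₁ w₂ : Wsp d), ∀ l₁ ∈ C, ∀ l₂ ∈ C,
      ‖gradW U w₁ l₁ - gradW U w₂ l₂‖ ≤ LU1 * (‖w₁ - w₂‖ + ‖l₁ - l₂‖) := by
    intro w₁ w₂ l₁ hl₁ l₂ hl₂
    set D₁ := fderiv ℝ (fun p : Wsp d × Lsp S => U p.1 p.2) (w₁, l₁) with hD₁
    set D₂ := fderiv ℝ (fun p : Wsp d × Lsp S => U p.1 p.2) (w₂, l₂) with hD₂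
    have he1 : gradW U w₁ l₁ = (InnerProductSpace.toDual ℝ (Wsp d)).symm
        (D₁.comp (ContinuousLinearMap.inl ℝ (Wsp d) (Lsp S))) :=
      congrArg _ (hpartU w₁ l₁).fderiv
    have he2 : gradW U w₂ l₂ = (InnerProductSpace.toDual ℝ (Wsp d)).symm
        (D₂.comp (ContinuousLinearMap.inl ℝ (Wsp d) (Lsp S))) :=
      congrArg _ (hpartU w₂ l₂).fderiv
    rw [he1, he2, ← map_sub, LinearIsometryEquiv.norm_map, ← ContinuousLinearMap.sub_comp]
    have hinl : ‖(D₁ - D₂).comp (ContinuousLinearMap.inl ℝ (Wsp d) (Lsp S))‖ ≤ ‖D₁ - D₂‖ := by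
      calc ‖(D₁ - D₂).comp (ContinuousLinearMap.inl ℝ (Wsp d) (Lsp S))‖
          ≤ ‖D₁ - D₂‖ * ‖ContinuousLinearMap.inl ℝ (Wsp d) (Lsp S)‖ :=
            ContinuousLinearMap.opNorm_comp_le _ _
        _ ≤ ‖D₁ - D₂‖ * 1 := by
            have hb : ‖ContinuousLinearMap.inl ℝ (Wsp d) (Lsp S)‖ ≤ 1 := by
              apply ContinuousLinearMap.opNorm_le_bound _ zero_le_one
              intro x
              simp [Prod.norm_def]
            exact mul_le_mul_of_nonneg_left hb (norm_nonneg _)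
        _ = ‖D₁ - D₂‖ := mul_one _
    exact hinl.trans (hgradUlip w₁ w₂ l₁ hl₁ l₂ hl₂)
  -- vanishing gradient at the minimizer
  have hgradmin : ∀ l0 ∈ C, gradW F (wstar l0) l0 = 0 := by
    intro l0 hl0
    have hlm : IsLocalMin (fun w' => F w' l0) (wstar l0) :=
      Filter.Eventually.of_forall (fun w' => hwstar l0 hl0 w')
    have h0 : fderiv ℝ (fun w' => F w' l0) (wstar l0) = 0 := hlm.fderiv_eq_zero
    show (InnerProductSpace.toDual ℝ (Wsp d)).symm _ = 0
    rw [h0, map_zero]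
  -- main estimate
  set Ha := hessWW F wa la with hHa'
  set Hb := hessWW F wb lb with hHb'
  set va := vstar wa la with hva'
  set vb := vstar wb lb with hvb'
  set ga := gradW U wa la with hga'
  set gb := gradW U wb lb with hgb'
  have hva : Ha va = ga := hvstar wa la hla
  have hvb : Hb vb = gb := hvstar wb lb hlb
  have hkey : Hb (vb - va) = (gb - ga) - (Hb - Ha) va := by
    rw [map_sub, hvb, ContinuousLinearMap.sub_apply, hva]
    abel
  have hnorm1 : μF * ‖vb - va‖ ≤ ‖Hb (vb - va)‖ := hHcoer lb hlb wb _
  have hnorm2 : ‖Hb (vb - va)‖ ≤ ‖gb - ga‖ + ‖(Hb - Ha) va‖ := by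
    rw [hkey]; exact norm_sub_le _ _
  have hvanorm : ‖va‖ ≤ LU0 / μF := by
    have h1 : μF * ‖va‖ ≤ ‖Ha va‖ := hHcoer la hla wa va
    rw [hva] at h1
    have h2 : ‖ga‖ ≤ LU0 := hUgradnorm wa la hla
    rw [le_div_iff₀ hμF]
    nlinarith
  set s := ‖wb - wa‖ + ‖lb - la‖ with hs
  have hgble : ‖gb - ga‖ ≤ LU1 * s := hUgradlip wb wa lb hlb la hla
  have hHba : ‖(Hb - Ha) va‖ ≤ LF2ww * s * (LU0 / μF) := by
    calc ‖(Hb - Ha) va‖ ≤ ‖Hb - Ha‖ * ‖va‖ := ContinuousLinearMap.le_opNorm _ _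
      _ ≤ (LF2ww * s) * (LU0 / μF) := by
          apply mul_le_mul (hhessWWlip wb wa lb hlb la hla) hvanorm (norm_nonneg _)
          positivity
  have hLF1pos : 0 < LF1 := lt_of_lt_of_le hμF hLF1
  have hwmove : ‖wb - wa‖ ≤ τ * LF1 * ‖wa - wstar la‖ := by
    have hwb : wb = wa - τ • gradW F wa la := hwrec t
    have hdiff : wb - wa = -(τ • gradW F wa la) := by rw [hwb]; abel
    rw [hdiff, norm_neg, norm_smul, Real.norm_eq_abs, abs_of_pos hτpos]
    calc τ * ‖gradW F wa la‖ = τ * ‖gradW F wa la - gradW F (wstar la) la‖ := by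
          rw [hgradmin la hla, sub_zero]
      _ ≤ τ * (LF1 * ‖wa - wstar la‖) :=
          mul_le_mul_of_nonneg_left (hgradFlip la hla wa (wstar la)) hτpos.le
      _ = τ * LF1 * ‖wa - wstar la‖ := by ring
  have hlmove : ‖lb - la‖ = γ * ‖γ⁻¹ • (la - lb)‖ := by
    rw [norm_smul, Real.norm_eq_abs, abs_of_pos (inv_pos.mpr hγpos), norm_sub_rev la lb]
    field_simp
  have hsle : s ≤ τ * LF1 * ‖wa - wstar la‖ + γ * ‖γ⁻¹ • (la - lb)‖ := by
    rw [hs]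
    linarith [hwmove, hlmove.le]
  have hKnn : 0 ≤ LU1 + LF2ww * (LU0 / μF) := by positivity
  have hchain : μF * ‖vb - va‖ ≤ (LU1 + LF2ww * (LU0 / μF)) * s := by
    calc μF * ‖vb - va‖ ≤ ‖gb - ga‖ + ‖(Hb - Ha) va‖ := hnorm1.trans hnorm2
      _ ≤ LU1 * s + LF2ww * s * (LU0 / μF) := add_le_add hgble hHba
      _ = (LU1 + LF2ww * (LU0 / μF)) * s := by ring
  have hfinal : μF * ‖vb - va‖ ≤ (LU1 + LF2ww * (LU0 / μF)) *
      (τ * LF1 * ‖wa - wstar la‖ + γ * ‖γ⁻¹ • (la - lb)‖) :=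
    hchain.trans (mul_le_mul_of_nonneg_left hsle hKnn)
  have hM : LU0 * LF2ww / μF ^ 2 + LU1 / μF = (LU1 + LF2ww * (LU0 / μF)) / μF := by
    field_simp
    ring
  rw [hM, div_mul_eq_mul_div, le_div_iff₀ hμF]
  nlinarith [hfinal]
end
end

section
/- Under Assumptions U and F, for every w ∈ ℝ^d and λ ∈ C, the dual solutions satisfy ‖v*(w, λ) − v*(λ)‖ ≤ M_{v*}‖w − w*(λ)‖, where M_{v*} := L_{U,0}L^{ww}_{F,2}/μ_F² + L_{U,1}/μ_F. -/
open MeasureTheory Finset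

noncomputable section

section AuxLemmas
variable {d S : ℕ}
open ContinuousLinearMap InnerProductSpace Filter Topology
open scoped RealInnerProductSpace

private lemma fderiv_partial (G : Wsp d → Lsp S → ℝ)
    (hG : Differentiable ℝ (fun p : Wsp d × Lsp S => G p.1 p.2)) (w : Wsp d) (l : Lsp S) :
    fderiv ℝ (fun w' => G w' l) w =
      (fderiv ℝ (fun p : Wsp d × Lsp S => G p.1 p.2) (w, l)).comp
        (ContinuousLinearMap.inl ℝ (Wsp d) (Lsp S)) :=
  by
  have := ((hG (w, l)).hasFDerivAt.comp w (hasFDerivAt_prodMk_left w l :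
    HasFDerivAt (fun e : Wsp d => (e, l)) (ContinuousLinearMap.inl ℝ (Wsp d) (Lsp S)) w)).fderiv
  exact this

private lemma gradW_eq (G : Wsp d → Lsp S → ℝ)
    (hG : Differentiable ℝ (fun p : Wsp d × Lsp S => G p.1 p.2)) (w : Wsp d) (l : Lsp S) :
    gradW G w l = (toDual ℝ (Wsp d)).symm
      ((fderiv ℝ (fun p : Wsp d × Lsp S => G p.1 p.2) (w, l)).comp
        (ContinuousLinearMap.inl ℝ (Wsp d) (Lsp S))) := by
  rw [gradW, gradient, fderiv_partial G hG w l]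

private lemma norm_inl_le' : ‖ContinuousLinearMap.inl ℝ (Wsp d) (Lsp S)‖ ≤ 1 := by
  refine ContinuousLinearMap.opNorm_le_bound _ zero_le_one fun x => ?_
  simp [Prod.norm_def]

private lemma gradW_differentiable (F : Wsp d → Lsp S → ℝ)
    (hF : ContDiff ℝ 2 (fun p : Wsp d × Lsp S => F p.1 p.2)) (l : Lsp S) :
    Differentiable ℝ (fun w => gradW F w l) := by
  have hFd : Differentiable ℝ (fun p : Wsp d × Lsp S => F p.1 p.2) :=
    hF.differentiable two_ne_zero
  have hD : ContDiff ℝ 1 (fderiv ℝ (fun p : Wsp d × Lsp S => F p.1 p.2)) :=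
    hF.fderiv_right (by norm_num)
  have h1 : Differentiable ℝ
      (fun w : Wsp d => fderiv ℝ (fun p : Wsp d × Lsp S => F p.1 p.2) (w, l)) :=
    (hD.differentiable one_ne_zero).comp ((differentiable_id.prodMk (differentiable_const l)))
  have h2 : Differentiable ℝ (fun w : Wsp d =>
      (fderiv ℝ (fun p : Wsp d × Lsp S => F p.1 p.2) (w, l)).comp
        (ContinuousLinearMap.inl ℝ (Wsp d) (Lsp S))) := by
    exact (((ContinuousLinearMap.compL ℝ (Wsp d) (Wsp d × Lsp S) ℝ).flip
      (ContinuousLinearMap.inl ℝ (Wsp d) (Lsp S))).differentiable).comp h1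
  have h3 : Differentiable ℝ (fun w : Wsp d => (toDual ℝ (Wsp d)).symm
      ((fderiv ℝ (fun p : Wsp d × Lsp S => F p.1 p.2) (w, l)).comp
        (ContinuousLinearMap.inl ℝ (Wsp d) (Lsp S)))) :=
    ((toDual ℝ (Wsp d)).symm.toContinuousLinearEquiv.toContinuousLinearMap.differentiable).comp h2
  have : (fun w => gradW F w l) = fun w : Wsp d => (toDual ℝ (Wsp d)).symm
      ((fderiv ℝ (fun p : Wsp d × Lsp S => F p.1 p.2) (w, l)).comp
        (ContinuousLinearMap.inl ℝ (Wsp d) (Lsp S))) :=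
    funext fun w => gradW_eq F hFd w l
  rw [this]; exact h3

private lemma monotone_hasDerivAt_nonneg {r : ℝ → ℝ} {c x : ℝ} (hr : Monotone r)
    (h : HasDerivAt r c x) : 0 ≤ c := by
  have h1 : Tendsto (slope r x) (𝓝[>] x) (𝓝 c) :=
    (hasDerivAt_iff_tendsto_slope.mp h).mono_left
      (nhdsWithin_mono x fun t ht => ne_of_gt ht)
  refine ge_of_tendsto h1 ?_
  filter_upwards [self_mem_nhdsWithin] with t ht
  rw [slope_def_field]
  have h2 : r x ≤ r t := hr (le_of_lt ht)
  have h3 : (0:ℝ) < t - x := sub_pos.2 ht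
  have : (0:ℝ) ≤ (r t - r x) / (t - x) := div_nonneg (by linarith) (by linarith)
  simpa [div_eq_iff] using this

private lemma hess_coercive_s12 (F : Wsp d → Lsp S → ℝ)
    (hF : ContDiff ℝ 2 (fun p : Wsp d × Lsp S => F p.1 p.2)) {μF : ℝ} (l : Lsp S)
    (hsc : StrongConvexOn Set.univ μF (fun w => F w l)) (w v : Wsp d) :
    μF * ‖v‖ ^ 2 ≤ ⟪v, hessWW F w l v⟫ := by
  have hFd : Differentiable ℝ (fun p : Wsp d × Lsp S => F p.1 p.2) :=
    hF.differentiable two_ne_zero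
  have hdiff := gradW_differentiable F hF l
  have hH : ∀ x : Wsp d, HasFDerivAt (fun w' => gradW F w' l) (hessWW F x l) x :=
    fun x => (hdiff x).hasFDerivAt
  set γ : ℝ → Wsp d := fun t => w + t • v with hγ_def
  have hγ : ∀ t : ℝ, HasDerivAt γ v t := by
    intro t
    simpa [hγ_def] using ((hasDerivAt_id t).smul_const v).const_add w
  have hpart : ∀ x : Wsp d, HasFDerivAt (fun w' => F w' l)
      (toDual ℝ (Wsp d) (gradW F x l)) x := by
    intro x
    have : DifferentiableAt ℝ (fun w' => F w' l) x :=
      by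
      have := (hFd (x, l)).comp x ((differentiableAt_id.prodMk (differentiableAt_const l) :
        DifferentiableAt ℝ (fun e : Wsp d => (e, l)) x))
      exact this
    exact this.hasGradientAt.hasFDerivAt
  set q : ℝ → ℝ := fun t => ⟪v, gradW F (γ t) l⟫ - μF * ⟪v, γ t⟫ with hq_def
  set ψ : ℝ → ℝ := fun t => F (γ t) l - μF / 2 * ‖γ t‖ ^ 2 with hψ_def
  have hψconv : ConvexOn ℝ Set.univ ψ := by
    have hg : ConvexOn ℝ Set.univ (fun x : Wsp d => F x l - μF / 2 * ‖x‖ ^ 2) :=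
      strongConvexOn_iff_convex.mp hsc
    have : ConvexOn ℝ ((AffineMap.lineMap w (w + v) : ℝ →ᵃ[ℝ] Wsp d) ⁻¹' Set.univ)
        ((fun x : Wsp d => F x l - μF / 2 * ‖x‖ ^ 2) ∘ (AffineMap.lineMap w (w + v) : ℝ →ᵃ[ℝ] Wsp d)) :=
      hg.comp_affineMap (AffineMap.lineMap w (w + v) : ℝ →ᵃ[ℝ] Wsp d)
    rw [Set.preimage_univ] at this
    convert this using 1
    funext t
    simp only [Function.comp_apply, AffineMap.lineMap_apply]
    have : t • (w + v -ᵥ w) +ᵥ w = γ t := by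
      simp [hγ_def, vsub_eq_sub, vadd_eq_add]
      abel
    rw [this]
  have hψderiv : ∀ t : ℝ, HasDerivAt ψ (q t) t := by
    intro t
    have h1 : HasDerivAt (fun t => F (γ t) l) (⟪v, gradW F (γ t) l⟫) t := by
      have := (hpart (γ t)).comp_hasDerivAt t (hγ t)
      simpa [Function.comp_def, toDual_apply_apply, real_inner_comm, mul_comm] using this
    have h2 : HasDerivAt (fun t => ‖γ t‖ ^ 2) (2 * ⟪v, γ t⟫) t := by
      have heq : (fun t => ‖γ t‖ ^ 2) = fun t => ⟪γ t, γ t⟫ := by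
        funext s; rw [real_inner_self_eq_norm_sq]
      rw [heq]
      have : HasDerivAt (fun t => ⟪γ t, γ t⟫) (⟪γ t, v⟫ + ⟪v, γ t⟫) t := (hγ t).inner ℝ (hγ t)
      convert this using 1
      rw [real_inner_comm]; ring
    have : HasDerivAt (fun t => F (γ t) l - μF / 2 * ‖γ t‖ ^ 2)
        (⟪v, gradW F (γ t) l⟫ - μF / 2 * (2 * ⟪v, γ t⟫)) t := h1.sub ((h2.const_mul (μF / 2)))
    convert this using 1
    simp only [hq_def]; ring
  have hqmono : Monotone q := by
    have h1 : deriv ψ = q := funext fun t => (hψderiv t).deriv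
    have := hψconv.monotoneOn_deriv (fun x _ => (hψderiv x).differentiableAt)
    rw [h1] at this
    exact monotoneOn_univ.mp this
  have hq0 : HasDerivAt q (⟪v, hessWW F w l v⟫ - μF * ⟪v, v⟫) 0 := by
    have hγ0 : γ 0 = w := by simp [hγ_def]
    have hgd : HasDerivAt (fun t => gradW F (γ t) l) (hessWW F (γ 0) l v) 0 :=
      (hH (γ 0)).comp_hasDerivAt 0 (hγ 0)
    have h1 : HasDerivAt (fun t => ⟪v, gradW F (γ t) l⟫) (⟪v, hessWW F w l v⟫) 0 := by
      have := (hasDerivAt_const (0:ℝ) v).inner ℝ hgd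
      simpa [hγ0] using this
    have h2 : HasDerivAt (fun t => μF * ⟪v, γ t⟫) (μF * ⟪v, v⟫) 0 := by
      have := ((hasDerivAt_const (0:ℝ) v).inner ℝ (hγ 0)).const_mul μF
      simpa using this
    exact h1.sub h2
  have hkey := monotone_hasDerivAt_nonneg hqmono hq0
  have : ⟪v, v⟫ = ‖v‖ ^ 2 := real_inner_self_eq_norm_sq v
  linarith [hkey, this.symm ▸ hkey]

private lemma norm_gradW_le (U : Wsp d → Lsp S → ℝ) {LU0 : ℝ} (h0 : 0 ≤ LU0) (l : Lsp S)
    (hlip : ∀ w₁ w₂ : Wsp d, |U w₁ l - U w₂ l| ≤ LU0 * ‖w₁ - w₂‖) (w : Wsp d) :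
    ‖gradW U w l‖ ≤ LU0 := by
  have hlw : LipschitzWith LU0.toNNReal (fun w' => U w' l) := by
    refine LipschitzWith.of_dist_le_mul fun x y => ?_
    rw [Real.dist_eq, dist_eq_norm, Real.coe_toNNReal _ h0]
    exact hlip x y
  have := norm_fderiv_le_of_lipschitz ℝ (x₀ := w) hlw
  rw [Real.coe_toNNReal _ h0] at this
  calc ‖gradW U w l‖ = ‖fderiv ℝ (fun w' => U w' l) w‖ := by
        rw [gradW, gradient, LinearIsometryEquiv.norm_map]
    _ ≤ LU0 := this

private lemma norm_gradW_sub_le (U : Wsp d → Lsp S → ℝ)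
    (hU : Differentiable ℝ (fun p : Wsp d × Lsp S => U p.1 p.2))
    (w₁ w₂ : Wsp d) (l : Lsp S) :
    ‖gradW U w₁ l - gradW U w₂ l‖ ≤
      ‖fderiv ℝ (fun p : Wsp d × Lsp S => U p.1 p.2) (w₁, l) -
        fderiv ℝ (fun p : Wsp d × Lsp S => U p.1 p.2) (w₂, l)‖ := by
  rw [gradW_eq U hU w₁ l, gradW_eq U hU w₂ l, ← map_sub, LinearIsometryEquiv.norm_map,
    ← ContinuousLinearMap.sub_comp]
  refine (ContinuousLinearMap.opNorm_comp_le _ _).trans ?_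
  have h := norm_inl_le' (d := d) (S := S)
  have hn : (0:ℝ) ≤ ‖fderiv ℝ (fun p : Wsp d × Lsp S => U p.1 p.2) (w₁, l) -
      fderiv ℝ (fun p : Wsp d × Lsp S => U p.1 p.2) (w₂, l)‖ := norm_nonneg _
  nlinarith

end AuxLemmas

/-- Sensitivity of the dual solution to the lower variable. -/
theorem dual_solution_sensitivity
    {d S : ℕ} (hd : 1 ≤ d) (hS : 1 ≤ S)
    (C : Set (Lsp S)) (hCne : C.Nonempty) (hCconv : Convex ℝ C) (hCcomp : IsCompact C)
    (U F : Wsp d → Lsp S → ℝ)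
    (hUdiff : ContDiff ℝ 1 (fun p : Wsp d × Lsp S => U p.1 p.2))
    (hFdiff : ContDiff ℝ 2 (fun p : Wsp d × Lsp S => F p.1 p.2))
    (wstar : Lsp S → Wsp d)
    (hwstar : ∀ l ∈ C, ∀ w : Wsp d, F (wstar l) l ≤ F w l)
    -- Assumption U
    (LU0 LU1 : ℝ) (hLU0 : 0 < LU0) (hLU1 : 0 < LU1)
    (hUlip : ∀ w₁ w₂ : Wsp d, ∀ l₁ ∈ C, ∀ l₂ ∈ C,
      |U w₁ l₁ - U w₂ l₂| ≤ LU0 * ‖((w₁, l₁) : Wsp d × Lsp S) - (w₂, l₂)‖)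
    (hgradUlip : ∀ w₁ w₂ : Wsp d, ∀ l₁ ∈ C, ∀ l₂ ∈ C,
      ‖fderiv ℝ (fun p : Wsp d × Lsp S => U p.1 p.2) (w₁, l₁) -
          fderiv ℝ (fun p : Wsp d × Lsp S => U p.1 p.2) (w₂, l₂)‖ ≤
        LU1 * (‖w₁ - w₂‖ + ‖l₁ - l₂‖))
    -- Assumption F
    (μF LF1 LF2ww MC LF2wl : ℝ)
    (hμF : 0 < μF) (hLF1 : μF ≤ LF1) (hLF2ww : 0 ≤ LF2ww) (hMC : 0 < MC) (hLF2wl : 0 < LF2wl)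
    (hFsc : ∀ l ∈ C, StrongConvexOn Set.univ μF (fun w => F w l))
    (hgradFlip : ∀ l ∈ C, ∀ w₁ w₂ : Wsp d, ‖gradW F w₁ l - gradW F w₂ l‖ ≤ LF1 * ‖w₁ - w₂‖)
    (hhessWWlip : ∀ w₁ w₂ : Wsp d, ∀ l₁ ∈ C, ∀ l₂ ∈ C,
      ‖hessWW F w₁ l₁ - hessWW F w₂ l₂‖ ≤ LF2ww * (‖w₁ - w₂‖ + ‖l₁ - l₂‖))
    (hhessWLbd : ∀ l₁ ∈ C, ∀ l₂ ∈ C, ‖hessWL F (wstar l₁) l₂‖ ≤ MC)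
    (hhessWLlip : ∀ w₁ w₂ : Wsp d, ∀ l₁ ∈ C, ∀ l₂ ∈ C,
      ‖hessWL F w₁ l₁ - hessWL F w₂ l₂‖ ≤ LF2wl * (‖w₁ - w₂‖ + ‖l₁ - l₂‖))
    -- the dual solution `v*(w, λ)`, characterized by `∇²_{ww}F(w,λ) v*(w,λ) = ∇_w U(w,λ)`
    (vstar : Wsp d → Lsp S → Wsp d)
    (hvstar : ∀ w : Wsp d, ∀ l ∈ C, hessWW F w l (vstar w l) = gradW U w l)
    : ∀ w : Wsp d, ∀ l ∈ C,
      ‖vstar w l - vstar (wstar l) l‖ ≤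
        (LU0 * LF2ww / μF ^ 2 + LU1 / μF) * ‖w - wstar l‖ := by
  intro w l hl
  have hUd : Differentiable ℝ (fun p : Wsp d × Lsp S => U p.1 p.2) :=
    hUdiff.differentiable one_ne_zero
  set w0 := wstar l with hw0
  set H1 := hessWW F w l with hH1
  set H2 := hessWW F w0 l with hH2
  set v1 := vstar w l with hv1
  set v2 := vstar w0 l with hv2def
  have hcoer : ∀ x u : Wsp d, μF * ‖u‖ ≤ ‖hessWW F x l u‖ := by
    intro x u
    rcases eq_or_ne u 0 with rfl | hu
    · simp
    · have h1 := hess_coercive_s12 F hFdiff l (hFsc l hl) x u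
      have h2 : (inner ℝ u (hessWW F x l u) : ℝ) ≤ ‖u‖ * ‖hessWW F x l u‖ :=
        real_inner_le_norm u _
      have hu' : 0 < ‖u‖ := norm_pos_iff.mpr hu
      nlinarith [norm_nonneg (hessWW F x l u)]
  have hUlipl : ∀ w₁ w₂ : Wsp d, |U w₁ l - U w₂ l| ≤ LU0 * ‖w₁ - w₂‖ := by
    intro w₁ w₂
    have h := hUlip w₁ w₂ l hl l hl
    have hnorm : ‖((w₁, l) : Wsp d × Lsp S) - (w₂, l)‖ = ‖w₁ - w₂‖ := by
      rw [Prod.mk_sub_mk, Prod.norm_def]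
      simp [max_eq_left (norm_nonneg _)]
    rwa [hnorm] at h
  have hgU : ‖gradW U w0 l‖ ≤ LU0 := norm_gradW_le U hLU0.le l hUlipl w0
  have hv2 : μF * ‖v2‖ ≤ LU0 := by
    have h := hcoer w0 v2
    rw [hv2def, hvstar w0 l hl] at h
    exact h.trans hgU
  have hgUlip : ‖gradW U w l - gradW U w0 l‖ ≤ LU1 * ‖w - w0‖ := by
    have h1 := norm_gradW_sub_le U hUd w w0 l
    have h2 := hgradUlip w w0 l hl l hl
    rw [sub_self, norm_zero, add_zero] at h2
    exact h1.trans h2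
  have hHlip : ‖H1 - H2‖ ≤ LF2ww * ‖w - w0‖ := by
    have h := hhessWWlip w w0 l hl l hl
    rwa [sub_self, norm_zero, add_zero] at h
  have hid : H1 (v1 - v2) = (gradW U w l - gradW U w0 l) - (H1 - H2) v2 := by
    have e1 : H1 v1 = gradW U w l := hvstar w l hl
    have e2 : H2 v2 = gradW U w0 l := hvstar w0 l hl
    rw [map_sub, ContinuousLinearMap.sub_apply, e1, e2]
    abel
  have hmain : μF * ‖v1 - v2‖ ≤ LU1 * ‖w - w0‖ + LF2ww * ‖w - w0‖ * ‖v2‖ := by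
    have h0 := hcoer w (v1 - v2)
    rw [← hH1, hid] at h0
    refine h0.trans ?_
    refine (norm_sub_le _ _).trans ?_
    have hb : ‖(H1 - H2) v2‖ ≤ LF2ww * ‖w - w0‖ * ‖v2‖ := by
      refine (ContinuousLinearMap.le_opNorm _ _).trans ?_
      exact mul_le_mul_of_nonneg_right hHlip (norm_nonneg _)
    exact add_le_add hgUlip hb
  have hμ2 : (0:ℝ) < μF ^ 2 := by positivity
  have key : μF ^ 2 * ‖v1 - v2‖ ≤ (LU0 * LF2ww + LU1 * μF) * ‖w - w0‖ := by
    nlinarith [mul_le_mul_of_nonneg_left hmain hμF.le,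
      mul_le_mul_of_nonneg_left hv2 (mul_nonneg hLF2ww (norm_nonneg (w - w0))),
      norm_nonneg (w - w0), norm_nonneg v2]
  have hrw : (LU0 * LF2ww / μF ^ 2 + LU1 / μF) * ‖w - w0‖ =
      ((LU0 * LF2ww + LU1 * μF) * ‖w - w0‖) / μF ^ 2 := by
    field_simp
  rw [hrw, le_div_iff₀ hμ2]
  linarith [key]
end
end
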